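/- arXiv:1906.04147 — 5 statements merged into one kernel-verified Lean document; each statement's English description precedes it below -/
import Mathlib

section
/- Let F be a free group and let a, b ∈ F be elements with ab ≠ ba. Then the subgroup ⟨a, b⟩ generated by a and b is free of rank 2 with basis {a, b}; equivalently, the homomorphism from the free group on two generators to F sending the generators to a and b respectively is injective. -/
open FreeGroup

namespace NCGF

variable {β : Type*}

/-- A list is "cancel-free" if no adjacent pair is (x,c),(x,!c). -/
def CF (w : List (β × Bool)) : Prop :=
  ∀ (j : ℕ) (x : β) (c : Bool), w[j]? = some (x, c) → w[j+1]? = some (x, !c) → False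

theorem cf_of_reduced [DecidableEq β] {L : List (β × Bool)} (hL : reduce L = L) : CF L := by
  intro j x c h1 h2
  have hj1 : j + 1 < L.length := (List.getElem?_eq_some_iff.1 h2).1
  have hj : j < L.length := Nat.lt_of_succ_lt hj1
  have hdecomp : L = L.take j ++ (x, c) :: (x, !c) :: L.drop (j + 2) := by
    conv_lhs => rw [← List.take_append_drop j L]
    congr 1
    rw [List.drop_eq_getElem_cons hj, List.drop_eq_getElem_cons hj1]
    have e1 : L[j] = (x, c) := by
      rw [(List.getElem?_eq_getElem hj)] at h1; exact Option.some.inj h1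
    have e2 : L[j+1] = (x, !c) := by
      rw [(List.getElem?_eq_getElem hj1)] at h2; exact Option.some.inj h2
    rw [e1, e2]
  exact reduce.not (p := False) (hL.trans hdecomp)

theorem cf_reverse {L : List (β × Bool)} (h : CF L) : CF L.reverse := by
  intro j x c h1 h2
  have hj1 : j + 1 < L.length := by
    simpa using (List.getElem?_eq_some_iff.1 h2).1
  have hj : j < L.length := Nat.lt_of_succ_lt hj1
  rw [List.getElem?_reverse (by simpa using hj)] at h1
  rw [List.getElem?_reverse (by simpa using hj1)] at h2
  -- positions k = L.length - 1 - (j+1) and k+1 = L.length - 1 - j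
  have hk : L.length - 1 - (j+1) + 1 = L.length - 1 - j := by omega
  exact h _ x (!c) h2 (by rw [hk, Bool.not_not]; exact h1)

end NCGF

namespace NCGF

open scoped Classical

variable [DecidableEq β] (w : List (β × Bool)) (x : β)

/-- Domain predicate for the partial shift associated to letter `x`. -/
def P (i : Fin (w.length + 1)) : Prop :=
  w[i.val]? = some (x, true) ∨ (0 < i.val ∧ w[i.val - 1]? = some (x, false))

/-- Range predicate. -/
def Q (i : Fin (w.length + 1)) : Prop :=
  (0 < i.val ∧ w[i.val - 1]? = some (x, true)) ∨ w[i.val]? = some (x, false)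

noncomputable def fwd (i : Fin (w.length + 1)) : Fin (w.length + 1) :=
  if h : w[i.val]? = some (x, true) then
    ⟨i.val + 1, by have := (List.getElem?_eq_some_iff.1 h).1; omega⟩
  else ⟨i.val - 1, by omega⟩

noncomputable def bwd (i : Fin (w.length + 1)) : Fin (w.length + 1) :=
  if h : w[i.val]? = some (x, false) then
    ⟨i.val + 1, by have := (List.getElem?_eq_some_iff.1 h).1; omega⟩
  else ⟨i.val - 1, by omega⟩

variable {w x}

theorem not_true_of_false {k : ℕ} (hw : CF w) (h : w[k]? = some (x, false)) :
    ¬ (w[k+1]? = some (x, true)) := fun h' => hw k x false h h'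

theorem not_false_of_true {k : ℕ} (hw : CF w) (h : w[k]? = some (x, true)) :
    ¬ (w[k+1]? = some (x, false)) := fun h' => hw k x true h h'

theorem fwd_mem (hw : CF w) {i} (h : P w x i) : Q w x (fwd w x i) := by
  rcases h with h | ⟨h0, h1⟩
  · simp only [fwd, dif_pos h, Q]
    exact Or.inl ⟨Nat.succ_pos _, by simpa using h⟩
  · have hna : ¬ (w[i.val]? = some (x, true)) := by
      intro h'
      obtain ⟨k, hk⟩ : ∃ k, i.val = k + 1 := ⟨i.val - 1, by omega⟩
      exact not_true_of_false hw (by rwa [hk, Nat.add_sub_cancel] at h1) (hk ▸ h')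
    simp only [fwd, dif_neg hna, Q]
    exact Or.inr h1

theorem bwd_mem (hw : CF w) {i} (h : Q w x i) : P w x (bwd w x i) := by
  rcases h with ⟨h0, h1⟩ | h
  · have hnb : ¬ (w[i.val]? = some (x, false)) := by
      intro h'
      obtain ⟨k, hk⟩ : ∃ k, i.val = k + 1 := ⟨i.val - 1, by omega⟩
      exact not_false_of_true hw (by rwa [hk, Nat.add_sub_cancel] at h1) (hk ▸ h')
    simp only [bwd, dif_neg hnb, P]
    exact Or.inl h1
  · simp only [bwd, dif_pos h, P]
    exact Or.inr ⟨Nat.succ_pos _, by simpa using h⟩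

theorem bwd_fwd (hw : CF w) {i} (h : P w x i) : bwd w x (fwd w x i) = i := by
  rcases h with h | ⟨h0, h1⟩
  · have hnb : ¬ (w[i.val + 1]? = some (x, false)) := not_false_of_true hw h
    simp only [fwd, dif_pos h, bwd]
    rw [dif_neg hnb]
    exact Fin.ext (by simp)
  · have hna : ¬ (w[i.val]? = some (x, true)) := by
      intro h'
      obtain ⟨k, hk⟩ : ∃ k, i.val = k + 1 := ⟨i.val - 1, by omega⟩
      exact not_true_of_false hw (by rwa [hk, Nat.add_sub_cancel] at h1) (hk ▸ h')
    simp only [fwd, dif_neg hna, bwd]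
    rw [dif_pos (by simpa using h1)]
    exact Fin.ext (by simp; omega)

theorem fwd_bwd (hw : CF w) {i} (h : Q w x i) : fwd w x (bwd w x i) = i := by
  rcases h with ⟨h0, h1⟩ | h
  · have hnb : ¬ (w[i.val]? = some (x, false)) := by
      intro h'
      obtain ⟨k, hk⟩ : ∃ k, i.val = k + 1 := ⟨i.val - 1, by omega⟩
      exact not_false_of_true hw (by rwa [hk, Nat.add_sub_cancel] at h1) (hk ▸ h')
    simp only [bwd, dif_neg hnb, fwd]
    rw [dif_pos (by simpa using h1)]
    exact Fin.ext (by simp; omega)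
  · have hna : ¬ (w[i.val + 1]? = some (x, true)) := not_true_of_false hw h
    simp only [bwd, dif_pos h, fwd]
    rw [dif_neg hna]
    exact Fin.ext (by simp)

variable (w x)

noncomputable def shiftEquiv (hw : CF w) : {i : Fin (w.length+1) // P w x i} ≃ {i // Q w x i} where
  toFun i := ⟨fwd w x i.1, fwd_mem hw i.2⟩
  invFun i := ⟨bwd w x i.1, bwd_mem hw i.2⟩
  left_inv i := Subtype.ext (bwd_fwd hw i.2)
  right_inv i := Subtype.ext (fwd_bwd hw i.2)

/-- The permutation associated to the letter `x`. -/
noncomputable def perm (hw : CF w) : Equiv.Perm (Fin (w.length + 1)) :=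
  (shiftEquiv w x hw).extendSubtype

variable {w x}

theorem perm_apply_true (hw : CF w) {k : ℕ} (h : w[k]? = some (x, true))
    (hk : k < w.length + 1) (hk1 : k + 1 < w.length + 1) :
    perm w x hw ⟨k, hk⟩ = ⟨k + 1, hk1⟩ := by
  have hp : P w x ⟨k, hk⟩ := Or.inl h
  rw [perm, Equiv.extendSubtype_apply_of_mem _ _ hp]
  show fwd w x _ = _
  rw [fwd, dif_pos (by simpa using h)]

theorem perm_apply_false (hw : CF w) {k : ℕ} (h : w[k]? = some (x, false))
    (hk : k < w.length + 1) (hk1 : k + 1 < w.length + 1) :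
    perm w x hw ⟨k + 1, hk1⟩ = ⟨k, hk⟩ := by
  have hp : P w x ⟨k + 1, hk1⟩ := Or.inr ⟨Nat.succ_pos _, by simpa using h⟩
  rw [perm, Equiv.extendSubtype_apply_of_mem _ _ hp]
  show fwd w x _ = _
  have hna : ¬ (w[k+1]? = some (x, true)) := not_true_of_false hw h
  rw [fwd, dif_neg (by simpa using hna)]
  exact Fin.ext (by simp)

end NCGF

namespace NCGF

variable [DecidableEq β] {w : List (β × Bool)}

theorem traj (hw : CF w) : ∀ (j : ℕ) (hj : j ≤ w.length),
    FreeGroup.lift (fun y => perm w y hw) (FreeGroup.mk (w.take j).reverse)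
      ⟨0, Nat.succ_pos _⟩ = ⟨j, by omega⟩ := by
  intro j
  induction j with
  | zero => intro _; simp [FreeGroup.one_eq_mk.symm]
  | succ j ih =>
    intro hj
    have hjlt : j < w.length := hj
    have htake : w.take (j+1) = w.take j ++ [w[j]] := by
      rw [List.take_succ, List.getElem?_eq_getElem hjlt]; rfl
    rw [htake, List.reverse_append, List.reverse_singleton]
    have hsplit : FreeGroup.mk ([w[j]] ++ (w.take j).reverse)
        = FreeGroup.mk [w[j]] * FreeGroup.mk (w.take j).reverse := (FreeGroup.mul_mk).symm
    rw [List.singleton_append, ← List.singleton_append, hsplit,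
      MonoidHom.map_mul, Equiv.Perm.mul_apply, ih (le_of_lt hjlt)]
    rcases hx : w[j] with ⟨x, b⟩
    have hx? : w[j]? = some (x, b) := by rw [List.getElem?_eq_getElem hjlt, hx]
    have hlift : FreeGroup.lift (fun y => perm w y hw) (FreeGroup.mk [(x, b)])
        = cond b (perm w x hw) (perm w x hw)⁻¹ := by
      rw [FreeGroup.lift_mk]; simp
    rw [hlift]
    cases b with
    | true =>
      simpa using perm_apply_true hw hx? (by omega) (by omega)
    | false =>
      have hpf := perm_apply_false hw hx? (by omega) (by omega)
      simpa using (Equiv.Perm.inv_eq_iff_eq).2 hpf.symm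

end NCGF

namespace NCGF

/-- Residual finiteness of free groups: a nontrivial element survives in some finite
permutation group. -/
theorem exists_perm_hom [DecidableEq β] (g : FreeGroup β) (hg : g ≠ 1) :
    ∃ (n : ℕ) (χ : FreeGroup β →* Equiv.Perm (Fin (n + 1))), χ g ≠ 1 := by
  set w : List (β × Bool) := (FreeGroup.toWord g).reverse with hwdef
  have hw : CF w := cf_reverse (cf_of_reduced (FreeGroup.reduce_toWord g))
  refine ⟨w.length, FreeGroup.lift (fun y => perm w y hw), ?_⟩
  have hlen : 0 < w.length := by
    rw [hwdef, List.length_reverse]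
    have : FreeGroup.toWord g ≠ [] := fun h => hg (FreeGroup.toWord_eq_nil_iff.1 h)
    exact List.length_pos_iff.2 this
  have hgw : g = FreeGroup.mk (w.take w.length).reverse := by
    rw [List.take_length, hwdef, List.reverse_reverse, FreeGroup.mk_toWord]
  have := traj hw w.length le_rfl
  rw [← hgw] at this
  intro h1
  rw [h1] at this
  simp only [Equiv.Perm.one_apply, Fin.mk.injEq] at this
  omega

end NCGF

namespace NCGF

/-- Mal'cev / Hopf property for the free group on two generators. -/
theorem hopf (ψ : FreeGroup (Fin 2) →* FreeGroup (Fin 2)) (hψ : Function.Surjective ψ)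
    {g : FreeGroup (Fin 2)} (hg : ψ g = 1) : g = 1 := by
  by_contra hg1
  obtain ⟨n, χ, hχ⟩ := exists_perm_hom g hg1
  have hfin : Finite (FreeGroup (Fin 2) →* Equiv.Perm (Fin (n + 1))) := by
    apply Finite.of_injective (fun h => (fun i : Fin 2 => h (FreeGroup.of i)))
    intro f g hfg
    exact FreeGroup.ext_hom f g fun a => congrFun hfg a
  have hinj : Function.Injective
      (fun χ' : FreeGroup (Fin 2) →* Equiv.Perm (Fin (n + 1)) => χ'.comp ψ) := by
    intro c1 c2 h
    refine MonoidHom.ext fun y => ?_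
    obtain ⟨z, rfl⟩ := hψ y
    exact DFunLike.congr_fun h z
  obtain ⟨χ', hχ'⟩ := Finite.injective_iff_surjective.1 hinj χ
  refine hχ ?_
  rw [← hχ']
  show χ' (ψ g) = 1
  rw [hg]
  exact χ'.map_one

/-- A free group over a subsingleton type is commutative. -/
theorem comm_of_subsingleton {γ : Type*} [Subsingleton γ] (u v : FreeGroup γ) :
    u * v = v * u := by
  rcases isEmpty_or_nonempty γ with h | ⟨⟨c⟩⟩
  · have hu : ∀ z : FreeGroup γ, z = 1 := by
      intro z
      rw [← FreeGroup.mk_toWord (x := z)]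
      cases hzw : z.toWord with
      | nil => exact FreeGroup.one_eq_mk.symm ▸ rfl
      | cons a t => exact (IsEmpty.false a.1).elim
    rw [hu u, hu v]
  · have hmem : ∀ z : FreeGroup γ, z ∈ Subgroup.zpowers (FreeGroup.of c) := by
      intro z
      have h1 : z ∈ Subgroup.closure (Set.range (FreeGroup.of : γ → FreeGroup γ)) := by
        rw [FreeGroup.closure_range_of]; trivial
      have hr : Set.range (FreeGroup.of : γ → FreeGroup γ) = {FreeGroup.of c} := by
        ext y
        constructor
        · rintro ⟨b, rfl⟩
          simp [Subsingleton.elim b c]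
        · rintro rfl
          exact ⟨c, rfl⟩
      rw [hr] at h1
      rwa [Subgroup.zpowers_eq_closure]
    obtain ⟨k, hk⟩ := hmem u
    obtain ⟨m, hm⟩ := hmem v
    rw [← hk, ← hm]
    exact Commute.zpow_zpow (Commute.refl _) k m

/-- A type receiving a surjection from `F₂` on free groups has at most two elements. -/
theorem mk_le_two_of_surj {γ : Type*} (ρ : FreeGroup (Fin 2) →* FreeGroup γ)
    (hρ : Function.Surjective ρ) : Cardinal.mk γ ≤ 2 := by
  classical
  set θ : FreeGroup γ →* Multiplicative (γ →₀ ℤ) :=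
    FreeGroup.lift (fun c => Multiplicative.ofAdd (Finsupp.single c 1)) with hθdef
  have hθ : Function.Surjective θ := by
    intro f
    induction f using Finsupp.induction with
    | zero => exact ⟨1, map_one θ⟩
    | single_add a b f' _ _ ih =>
      obtain ⟨z, hz⟩ := ih
      refine ⟨FreeGroup.of a ^ b * z, ?_⟩
      rw [θ.map_mul, θ.map_zpow, hz, hθdef, FreeGroup.lift_apply_of]
      show Multiplicative.ofAdd _ ^ b * Multiplicative.ofAdd f' = _
      rw [← ofAdd_zsmul, ← ofAdd_add, Finsupp.smul_single', mul_one]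
      rfl
  set κ : FreeGroup (Fin 2) →* Multiplicative (γ →₀ ℤ) := θ.comp ρ with hκdef
  set S : Set (γ →₀ ℤ) := {Multiplicative.toAdd (κ (FreeGroup.of 0)),
    Multiplicative.toAdd (κ (FreeGroup.of 1))} with hSdef
  have hspan : ∀ f : γ →₀ ℤ, f ∈ Submodule.span ℤ S := by
    intro f
    have hmem : Multiplicative.ofAdd f ∈
        Subgroup.closure (κ '' Set.range (FreeGroup.of : Fin 2 → FreeGroup (Fin 2))) := by
      rw [← MonoidHom.map_closure, FreeGroup.closure_range_of,
        Subgroup.map_top_of_surjective κ (hθ.comp hρ)]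
      trivial
    have key : ∀ z, z ∈ Subgroup.closure
        (κ '' Set.range (FreeGroup.of : Fin 2 → FreeGroup (Fin 2))) →
        Multiplicative.toAdd z ∈ Submodule.span ℤ S := by
      intro z hz
      induction hz using Subgroup.closure_induction with
      | mem y hy =>
        obtain ⟨w', ⟨i, rfl⟩, rfl⟩ := hy
        apply Submodule.subset_span
        fin_cases i
        · exact Set.mem_insert _ _
        · exact Set.mem_insert_of_mem _ rfl
      | one => exact Submodule.zero_mem _
      | mul y z' _ _ hy hz' => exact Submodule.add_mem _ hy hz'
      | inv y _ hy => exact Submodule.neg_mem _ hy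
    simpa using key _ hmem
  have htop : Submodule.span ℤ S = ⊤ := eq_top_iff.2 fun f _ => hspan f
  have hS2 : Cardinal.mk S ≤ 2 := by
    refine (Cardinal.mk_insert_le).trans ?_
    rw [Cardinal.mk_singleton]
    norm_num
  have h1 : Module.rank ℤ (γ →₀ ℤ) ≤ 2 := by
    calc Module.rank ℤ (γ →₀ ℤ) = Module.rank ℤ (⊤ : Submodule ℤ (γ →₀ ℤ)) := (rank_top ℤ (γ →₀ ℤ)).symm
    _ = Module.rank ℤ (Submodule.span ℤ S) := by rw [htop]
    _ ≤ Cardinal.mk S := rank_span_le S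
    _ ≤ 2 := hS2
  rwa [rank_finsupp_self, Cardinal.lift_uzero] at h1

end NCGF

open NCGF in
/-- Two non-commuting elements of a free group generate a free group of rank two:
the homomorphism from the free group on two generators sending the generators to
`a` and `b` is injective. -/
theorem noncommuting_generate_free {α : Type*} (a b : FreeGroup α)
    (hab : a * b ≠ b * a) :
    Function.Injective (FreeGroup.lift (![a, b] : Fin 2 → FreeGroup α)) := by
  set φ : FreeGroup (Fin 2) →* FreeGroup α := FreeGroup.lift ![a, b] with hφ
  rw [injective_iff_map_eq_one]
  intro g hg
  set H : Subgroup (FreeGroup α) := φ.range with hH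
  letI : IsFreeGroup H := inferInstance
  set β := IsFreeGroup.Generators H with hβ
  set e : H ≃* FreeGroup β := IsFreeGroup.toFreeGroup H with he
  set ρ : FreeGroup (Fin 2) →* FreeGroup β := e.toMonoidHom.comp φ.rangeRestrict with hρdef
  have hρ : Function.Surjective ρ := e.surjective.comp φ.rangeRestrict_surjective
  have hnt : Nontrivial β := by
    by_contra h
    haveI : Subsingleton β := not_nontrivial_iff_subsingleton.1 h
    have ha : a ∈ H := ⟨FreeGroup.of 0, by simp [hφ]⟩
    have hb : b ∈ H := ⟨FreeGroup.of 1, by simp [hφ]⟩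
    refine hab ?_
    have hcomm := comm_of_subsingleton (e ⟨a, ha⟩) (e ⟨b, hb⟩)
    have h2 : (⟨a, ha⟩ : H) * ⟨b, hb⟩ = ⟨b, hb⟩ * ⟨a, ha⟩ :=
      e.injective (by rw [e.map_mul, e.map_mul, hcomm])
    exact Subtype.ext_iff.1 h2
  have hle : Cardinal.mk β ≤ 2 := mk_le_two_of_surj ρ hρ
  have hge : (2 : Cardinal) ≤ Cardinal.mk β := Cardinal.two_le_iff.2 (by
    obtain ⟨x, y, hxy⟩ := hnt; exact ⟨x, y, hxy⟩)
  have heq : Cardinal.mk β = 2 := le_antisymm hle hge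
  have hne : Nonempty (β ≃ Fin 2) := by
    rw [← Cardinal.lift_mk_eq']
    simp [heq, Cardinal.mk_fintype]
  obtain ⟨j⟩ := hne
  set ψ : FreeGroup (Fin 2) →* FreeGroup (Fin 2) :=
    (FreeGroup.freeGroupCongr j).toMonoidHom.comp ρ with hψdef
  have hψ : Function.Surjective ψ := (FreeGroup.freeGroupCongr j).surjective.comp hρ
  have hker : ψ g = 1 := by
    show (FreeGroup.freeGroupCongr j) (e (φ.rangeRestrict g)) = 1
    have hz : φ.rangeRestrict g = 1 := Subtype.ext (by simpa using hg)
    rw [hz, e.map_one, (FreeGroup.freeGroupCongr j).map_one]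
  exact hopf ψ hψ hker
end

section
/- Let F be a free group of rank at least 2, Φ an automorphism of F, and c ∈ F an element with Φ(c) ≠ c. Then Fix(Φ) ∩ c · Fix(Φ) · c⁻¹ is either trivial or an infinite cyclic root-closed subgroup of F. -/
open FreeGroup in
theorem subsingleton_of_central' {β : Type*} (z : FreeGroup β) (hz : z ≠ 1)
    (hcomm : ∀ w : FreeGroup β, z * w = w * z) : Subsingleton β := by
  classical
  constructor
  intro x y
  by_contra hxy
  have hw : z.toWord ≠ [] := by
    intro h
    exact hz (by rw [← mk_toWord (x := z), h]; rfl)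
  obtain ⟨⟨a, s⟩, t, hwt⟩ := List.exists_cons_of_ne_nil hw
  obtain ⟨c, hca⟩ : ∃ c : β, c ≠ a := by
    rcases eq_or_ne x a with h | h
    · refine ⟨y, fun hy => hxy ?_⟩; rw [h, hy]
    · exact ⟨x, h⟩
  have hofc : FreeGroup.of c = mk [(c, true)] := rfl
  have h1 : (FreeGroup.of c * z).toWord = (c, true) :: z.toWord := by
    conv_lhs => rw [← mk_toWord (x := z), hofc, mul_mk, toWord_mk]
    show reduce ((c, true) :: z.toWord) = _
    rw [reduce.cons, reduce_toWord, hwt]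
    simp [hca]
  have h2 : (z * FreeGroup.of c).toWord = reduce (z.toWord ++ [(c, true)]) := by
    conv_lhs => rw [← mk_toWord (x := z), hofc, mul_mk, toWord_mk]
  have heq : (c, true) :: z.toWord = reduce (z.toWord ++ [(c, true)]) := by
    rw [← h1, ← h2, hcomm]
  have hsub : List.Sublist (reduce (z.toWord ++ [(c, true)])) (z.toWord ++ [(c, true)]) :=
    (reduce.red).sublist
  have hlen : ((c, true) :: z.toWord).length = (z.toWord ++ [(c, true)]).length := by
    simp
  have heq2 : (c, true) :: z.toWord = z.toWord ++ [(c, true)] := by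
    rw [heq]
    exact hsub.eq_of_length (by rw [← heq, hlen])
  rw [hwt] at heq2
  simp only [List.cons_append, List.cons.injEq, Prod.mk.injEq] at heq2
  exact hca heq2.1.1

/-- A free group over a subsingleton type embeds in `Multiplicative ℤ`. -/
theorem exists_injective_hom_of_subsingleton {β : Type*} [Subsingleton β] :
    ∃ f : FreeGroup β →* Multiplicative ℤ, Function.Injective f := by
  rcases isEmpty_or_nonempty β with h | ⟨⟨b⟩⟩
  · refine ⟨1, ?_⟩
    have : Subsingleton (FreeGroup β) := by
      constructor
      rintro ⟨L₁⟩ ⟨L₂⟩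
      have h1 : L₁ = [] := List.eq_nil_iff_forall_not_mem.mpr (fun p _ => h.elim p.1)
      have h2 : L₂ = [] := List.eq_nil_iff_forall_not_mem.mpr (fun p _ => h.elim p.1)
      rw [h1, h2]
    intro u v _
    exact Subsingleton.elim u v
  · refine ⟨FreeGroup.lift (fun _ => Multiplicative.ofAdd (1 : ℤ)), ?_⟩
    have hli : Function.LeftInverse (zpowersHom (FreeGroup β) (FreeGroup.of b))
        (FreeGroup.lift (fun _ => Multiplicative.ofAdd (1 : ℤ))) := by
      intro u
      have : (zpowersHom (FreeGroup β) (FreeGroup.of b)).comp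
          (FreeGroup.lift (fun _ => Multiplicative.ofAdd (1 : ℤ))) = MonoidHom.id _ := by
        apply FreeGroup.ext_hom
        intro a
        simp [Subsingleton.elim a b]
      exact DFunLike.congr_fun this u
    exact hli.injective

/-- Key lemma: a subgroup of a free group containing a nontrivial central element
embeds into `Multiplicative ℤ`. -/
theorem subgroup_embeds_int {α : Type*} (H : Subgroup (FreeGroup α)) (z : FreeGroup α)
    (hzH : z ∈ H) (hz : z ≠ 1) (hcomm : ∀ x ∈ H, z * x = x * z) :
    ∃ f : H →* Multiplicative ℤ, Function.Injective f := by
  let e : H ≃* FreeGroup (IsFreeGroup.Generators H) := IsFreeGroup.toFreeGroup H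
  have hsub : Subsingleton (IsFreeGroup.Generators H) := by
    refine subsingleton_of_central' (e ⟨z, hzH⟩) ?_ ?_
    · intro h
      have : (⟨z, hzH⟩ : H) = 1 := e.injective (by rw [h, map_one])
      exact hz (congrArg Subtype.val this)
    · intro w
      obtain ⟨u, rfl⟩ := e.surjective w
      rw [← map_mul, ← map_mul]
      congr 1
      ext
      exact hcomm u.1 u.2
  obtain ⟨f, hf⟩ := exists_injective_hom_of_subsingleton (β := IsFreeGroup.Generators H)
  exact ⟨f.comp e.toMonoidHom, hf.comp e.injective⟩

/-- Nontrivial elements of a free group have infinite order. -/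
theorem freeGroup_zpow_ne_one {α : Type*} {x : FreeGroup α} (hx : x ≠ 1) {k : ℤ} (hk : k ≠ 0) :
    x ^ k ≠ 1 := by
  intro h
  obtain ⟨f, hf⟩ := subgroup_embeds_int (Subgroup.zpowers x) x (Subgroup.mem_zpowers x) hx
    (by
      intro y hy
      obtain ⟨n, rfl⟩ := Subgroup.mem_zpowers_iff.mp hy
      exact (Commute.zpow_right (Commute.refl x) n).eq)
  have hX : f ⟨x, Subgroup.mem_zpowers x⟩ ^ k = 1 := by
    rw [← map_zpow, ← map_one f]
    congr 1
    ext
    exact h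
  have : f ⟨x, Subgroup.mem_zpowers x⟩ = 1 := by
    have h0 := congrArg Multiplicative.toAdd hX
    simp only [toAdd_zpow, toAdd_one] at h0
    rcases smul_eq_zero.mp h0 with h | h
    · exact absurd h hk
    · exact Multiplicative.toAdd.injective (by simpa using h)
  have : (⟨x, Subgroup.mem_zpowers x⟩ : Subgroup.zpowers x) = 1 := hf (by rw [this, map_one])
  exact hx (congrArg Subtype.val this)

/-- Unique roots in free groups. -/
theorem freeGroup_unique_roots {α : Type*} {a b : FreeGroup α} {k : ℤ} (hk : k ≠ 0)
    (h : a ^ k = b ^ k) : a = b := by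
  rcases eq_or_ne a 1 with rfl | ha
  · by_contra hb
    exact freeGroup_zpow_ne_one (Ne.symm hb) hk (by rw [← h, one_zpow])
  · have hg : a ^ k ≠ 1 := freeGroup_zpow_ne_one ha hk
    set C := Subgroup.centralizer {a ^ k} with hC
    have haC : a ∈ C := Subgroup.mem_centralizer_iff.mpr
      (by rintro g rfl; exact (Commute.zpow_left (Commute.refl a) k).eq)
    have hbC : b ∈ C := Subgroup.mem_centralizer_iff.mpr
      (by rintro g rfl; rw [h]; exact (Commute.zpow_left (Commute.refl b) k).eq)
    have hgC : a ^ k ∈ C := Subgroup.mem_centralizer_iff.mpr (by rintro g rfl; rfl)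
    obtain ⟨f, hf⟩ := subgroup_embeds_int C (a ^ k) hgC hg
      (fun x hx => Subgroup.mem_centralizer_iff.mp hx (a ^ k) rfl)
    have hAB : f ⟨a, haC⟩ ^ k = f ⟨b, hbC⟩ ^ k := by
      rw [← map_zpow, ← map_zpow]
      congr 1
      ext
      exact h
    have : f ⟨a, haC⟩ = f ⟨b, hbC⟩ := by
      have h2 := congrArg Multiplicative.toAdd hAB
      simp only [toAdd_zpow] at h2
      exact Multiplicative.toAdd.injective (smul_right_injective ℤ hk h2)
    have : (⟨a, haC⟩ : C) = ⟨b, hbC⟩ := hf this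
    exact congrArg Subtype.val this

/-- A subgroup of a free group with a nontrivial central element is infinite cyclic. -/
theorem subgroup_cyclic_of_central {α : Type*} (H : Subgroup (FreeGroup α)) (z : FreeGroup α)
    (hzH : z ∈ H) (hz : z ≠ 1) (hcomm : ∀ x ∈ H, z * x = x * z) :
    ∃ d : FreeGroup α, d ≠ 1 ∧ H = Subgroup.zpowers d := by
  obtain ⟨f, hf⟩ := subgroup_embeds_int H z hzH hz hcomm
  have : IsCyclic H := by
    have e := MonoidHom.ofInjective hf
    exact isCyclic_of_surjective e.symm e.symm.surjective
  obtain ⟨g, hg⟩ := IsCyclic.exists_generator (α := H)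
  refine ⟨(g : FreeGroup α), ?_, ?_⟩
  · intro hd
    obtain ⟨k, hk⟩ := Subgroup.mem_zpowers_iff.mp (hg ⟨z, hzH⟩)
    apply hz
    have h2 : ((g : FreeGroup α)) ^ k = z := by simpa using congrArg Subtype.val hk
    rw [← h2, hd, one_zpow]
  · ext u
    constructor
    · intro hu
      obtain ⟨k, hk⟩ := Subgroup.mem_zpowers_iff.mp (hg ⟨u, hu⟩)
      exact Subgroup.mem_zpowers_iff.mpr ⟨k, by simpa using congrArg Subtype.val hk⟩
    · intro hu
      obtain ⟨k, hk⟩ := Subgroup.mem_zpowers_iff.mp hu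
      rw [← hk]
      exact Subgroup.zpow_mem H g.2 k



/-- The subgroup of points fixed by an automorphism. -/
def fixedSubgroup {G : Type*} [Group G] (Φ : MulAut G) : Subgroup G where
  carrier := {x | Φ x = x}
  one_mem' := by simp
  mul_mem' := by
    intro a b ha hb
    simp only [Set.mem_setOf_eq] at *
    rw [map_mul, ha, hb]
  inv_mem' := by
    intro a ha
    simp only [Set.mem_setOf_eq] at *
    rw [map_inv, ha]

/-- A subgroup is root-closed if `x ^ k ∈ H` for `k ≠ 0` implies `x ∈ H`. -/
def IsRootClosed {G : Type*} [Group G] (H : Subgroup G) : Prop :=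
  ∀ (x : G) (k : ℤ), k ≠ 0 → x ^ k ∈ H → x ∈ H

/-- If `Φ` is an automorphism of a free group of rank at least two and `Φ c ≠ c`,
then `Fix Φ ∩ c (Fix Φ) c⁻¹` is trivial or infinite cyclic and root-closed. -/
theorem fix_inter_conj_fix_trivial_or_cyclic {α : Type*} [Nontrivial α]
    (Φ : MulAut (FreeGroup α)) (c : FreeGroup α) (hc : Φ c ≠ c) :
    fixedSubgroup Φ ⊓ (fixedSubgroup Φ).map (MulAut.conj c).toMonoidHom = ⊥ ∨
      ((∃ d : FreeGroup α, d ≠ 1 ∧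
          fixedSubgroup Φ ⊓ (fixedSubgroup Φ).map (MulAut.conj c).toMonoidHom =
            Subgroup.zpowers d) ∧
        IsRootClosed
          (fixedSubgroup Φ ⊓ (fixedSubgroup Φ).map (MulAut.conj c).toMonoidHom)) := by
  set H := fixedSubgroup Φ ⊓ (fixedSubgroup Φ).map (MulAut.conj c).toMonoidHom with hH
  have memfix : ∀ u : FreeGroup α, u ∈ fixedSubgroup Φ ↔ Φ u = u := fun u => Iff.rfl
  have memmap : ∀ u : FreeGroup α, u ∈ (fixedSubgroup Φ).map (MulAut.conj c).toMonoidHom ↔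
      ∃ y : FreeGroup α, Φ y = y ∧ c * y * c⁻¹ = u := by
    intro u
    rw [Subgroup.mem_map]
    simp only [MulEquiv.coe_toMonoidHom, MulAut.conj_apply]
    exact ⟨fun ⟨y, hy, h⟩ => ⟨y, hy, h⟩, fun ⟨y, hy, h⟩ => ⟨y, hy, h⟩⟩
  set g : FreeGroup α := c⁻¹ * Φ c with hgdef
  have hg : g ≠ 1 := by
    intro h
    apply hc
    have h2 := congrArg (fun t => c * t) h
    simpa [hgdef] using h2
  -- key commutation
  have hkey : ∀ x ∈ H, g * (c⁻¹ * x * c) = (c⁻¹ * x * c) * g := by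
    intro x hx
    obtain ⟨hx1, hx2⟩ := Subgroup.mem_inf.mp hx
    obtain ⟨y, hy, hxy⟩ := (memmap x).mp hx2
    have hyx : y = c⁻¹ * x * c := by rw [← hxy]; group
    have key : Φ c * y * (Φ c)⁻¹ = c * y * c⁻¹ := by
      have : Φ (c * y * c⁻¹) = Φ c * y * (Φ c)⁻¹ := by
        rw [map_mul, map_mul, map_inv, hy]
      rw [← this, hxy, (memfix x).mp hx1, ← hxy]
    rw [← hyx, hgdef]
    have h5 : Φ c * y = c * y * c⁻¹ * Φ c := by
      rw [← key]; group
    calc c⁻¹ * Φ c * y = c⁻¹ * (Φ c * y) := by rw [mul_assoc]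
      _ = c⁻¹ * (c * y * c⁻¹ * Φ c) := by rw [h5]
      _ = y * (c⁻¹ * Φ c) := by group
  -- centralizer of g is cyclic
  obtain ⟨r, hr1, hrC⟩ := subgroup_cyclic_of_central (Subgroup.centralizer {g}) g
    (Subgroup.mem_centralizer_iff.mpr (by rintro h rfl; rfl)) hg
    (fun x hx => (Subgroup.mem_centralizer_iff.mp hx g rfl))
  -- H is commutative
  have hHcomm : ∀ x₁ ∈ H, ∀ x₂ ∈ H, x₁ * x₂ = x₂ * x₁ := by
    intro x₁ h₁ x₂ h₂
    have m₁ : c⁻¹ * x₁ * c ∈ Subgroup.centralizer {g} :=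
      Subgroup.mem_centralizer_iff.mpr (by rintro h rfl; exact hkey x₁ h₁)
    have m₂ : c⁻¹ * x₂ * c ∈ Subgroup.centralizer {g} :=
      Subgroup.mem_centralizer_iff.mpr (by rintro h rfl; exact hkey x₂ h₂)
    rw [hrC] at m₁ m₂
    obtain ⟨k₁, hk₁⟩ := Subgroup.mem_zpowers_iff.mp m₁
    obtain ⟨k₂, hk₂⟩ := Subgroup.mem_zpowers_iff.mp m₂
    have hyc : (c⁻¹ * x₁ * c) * (c⁻¹ * x₂ * c) = (c⁻¹ * x₂ * c) * (c⁻¹ * x₁ * c) := by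
      rw [← hk₁, ← hk₂, ← zpow_add, ← zpow_add, add_comm]
    have e1 : x₁ * x₂ = c * ((c⁻¹ * x₁ * c) * (c⁻¹ * x₂ * c)) * c⁻¹ := by group
    rw [e1, hyc]
    group
  rcases eq_or_ne H ⊥ with hbot | hbot
  · exact Or.inl hbot
  · right
    constructor
    · obtain ⟨⟨z, hzH⟩, hz1⟩ := Subgroup.ne_bot_iff_exists_ne_one.mp hbot
      have hz : z ≠ 1 := by
        intro h
        exact hz1 (Subtype.ext h)
      exact subgroup_cyclic_of_central H z hzH hz (fun x hx => hHcomm z hzH x hx)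
    · intro x k hk hxk
      obtain ⟨hx1, hx2⟩ := Subgroup.mem_inf.mp hxk
      have hfix : Φ x = x := by
        have : (Φ x) ^ k = x ^ k := by
          rw [← map_zpow]
          exact (memfix _).mp hx1
        exact freeGroup_unique_roots hk this
      obtain ⟨y, hy, hxy⟩ := (memmap _).mp hx2
      have hyx : y = (c⁻¹ * x * c) ^ k := by
        have h7 : y = c⁻¹ * x ^ k * c := by rw [← hxy]; group
        have h6 : (MulAut.conj c⁻¹) (x ^ k) = ((MulAut.conj c⁻¹) x) ^ k := map_zpow _ _ _
        simp only [MulAut.conj_apply, inv_inv] at h6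
        rw [h7, h6]
      have hfix2 : Φ (c⁻¹ * x * c) = c⁻¹ * x * c := by
        have : (Φ (c⁻¹ * x * c)) ^ k = (c⁻¹ * x * c) ^ k := by
          rw [← map_zpow, ← hyx, hy, hyx]
        exact freeGroup_unique_roots hk this
      refine Subgroup.mem_inf.mpr ⟨(memfix x).mpr hfix, (memmap x).mpr ⟨c⁻¹ * x * c, hfix2, by group⟩⟩
end

section
/- Let F be a free group of rank at least 2 and Φ an automorphism of F whose fixed subgroup Fix(Φ) is nontrivial. Then Fix(Φ) is its own normalizer in F: N_F(Fix(Φ)) = Fix(Φ). -/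
namespace FixedSubgroupAux

open Subgroup

variable {α : Type*}

/-- Distinct generators of a free group do not commute. -/
lemma not_commute_of {T : Type*} {a b : T} (hab : a ≠ b) :
    ¬ Commute (FreeGroup.of a) (FreeGroup.of b) := by
  classical
  intro h
  let σ : Equiv.Perm (Fin 3) := Equiv.swap 0 1
  let τ : Equiv.Perm (Fin 3) := Equiv.swap 1 2
  let φ : FreeGroup T →* Equiv.Perm (Fin 3) :=
    FreeGroup.lift (fun t => if t = a then σ else if t = b then τ else 1)
  have h2 := h.map φ
  have ha : φ (FreeGroup.of a) = σ := by simp [φ]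
  have hb : φ (FreeGroup.of b) = τ := by simp [φ, hab.symm]
  rw [Commute, SemiconjBy, ha, hb] at h2
  have h3 := DFunLike.congr_fun h2 0
  simp [σ, τ, Equiv.swap_apply_def, Equiv.Perm.mul_apply] at h3

/-- A free group on a subsingleton type is generated by one element. -/
lemma exists_gen_of_subsingleton (T : Type*) [Subsingleton T] :
    ∃ ζ : FreeGroup T, ∀ w : FreeGroup T, w ∈ Subgroup.zpowers ζ := by
  rcases isEmpty_or_nonempty T with hT | ⟨⟨t₀⟩⟩
  · refine ⟨1, fun w => ?_⟩
    have : w = 1 := by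
      induction w using FreeGroup.induction_on with
      | C1 => rfl
      | of x => exact (hT.false x).elim
      | inv_of x ih => rw [ih]; simp
      | mul x y ihx ihy => rw [ihx, ihy]; simp
    simp [this]
  · refine ⟨FreeGroup.of t₀, fun w => ?_⟩
    induction w using FreeGroup.induction_on with
    | C1 => exact one_mem _
    | of x => rw [Subsingleton.elim x t₀]; exact Subgroup.mem_zpowers _
    | inv_of x ih => exact inv_mem ih
    | mul x y ihx ihy => exact mul_mem ihx ihy


/-- An abelian subgroup of a free group is cyclic. -/
lemma exists_gen_of_abelian (K : Subgroup (FreeGroup α))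
    (hab : ∀ a ∈ K, ∀ b ∈ K, Commute a b) :
    ∃ m ∈ K, ∀ u ∈ K, u ∈ Subgroup.zpowers m := by
  let T := IsFreeGroup.Generators K
  let e : K ≃* FreeGroup T := IsFreeGroup.toFreeGroup ↥K
  have hsub : Subsingleton T := by
    by_contra hns
    rcases not_subsingleton_iff_nontrivial.mp hns with ⟨t₁, t₂, hne⟩
    apply not_commute_of hne
    have h : Commute (e.symm (FreeGroup.of t₁)) (e.symm (FreeGroup.of t₂)) := by
      have := hab _ (e.symm (FreeGroup.of t₁)).2 _ (e.symm (FreeGroup.of t₂)).2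
      exact Subtype.ext this
    have := h.map e.toMonoidHom
    simpa using this
  rcases exists_gen_of_subsingleton T with ⟨ζ, hζ⟩
  refine ⟨(e.symm ζ : K), (e.symm ζ).2, fun u hu => ?_⟩
  rcases hζ (e ⟨u, hu⟩) with ⟨n, hn⟩
  refine ⟨n, ?_⟩
  have : (⟨u, hu⟩ : K) = (e.symm ζ) ^ n := by
    apply e.injective
    rw [map_zpow, e.apply_symm_apply]
    exact hn.symm
  have h2 := congrArg (Subtype.val) this
  simpa using h2.symm

/-- Commuting elements of a free group are powers of a common element. -/
lemma commute_common_root {x y : FreeGroup α} (h : Commute x y) :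
    ∃ z : FreeGroup α, x ∈ Subgroup.zpowers z ∧ y ∈ Subgroup.zpowers z := by
  set K := Subgroup.closure ({x, y} : Set (FreeGroup α)) with hK
  have hx : x ∈ K := Subgroup.subset_closure (by simp)
  have hy : y ∈ K := Subgroup.subset_closure (by simp)
  have hab : ∀ a ∈ K, ∀ b ∈ K, Commute a b := by
    intro a ha b hb
    refine Subgroup.closure_induction₂ (p := fun a b _ _ => Commute a b)
      (fun p q hp hq => ?_) ?_ ?_ ?_ ?_ ?_ ?_ ha hb
    · rcases hp with rfl | rfl <;> rcases hq with rfl | rfl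
      · rfl
      · exact h
      · exact h.symm
      · rfl
    · intro q _; exact Commute.one_left q
    · intro p _; exact Commute.one_right p
    · intro p q r _ _ _ h1 h2; exact h1.mul_left h2
    · intro p q r _ _ _ h1 h2; exact h1.mul_right h2
    · intro p q _ _ h1; exact h1.inv_left
    · intro p q _ _ h1; exact h1.inv_right
  rcases exists_gen_of_abelian K hab with ⟨m, _, hm⟩
  exact ⟨m, hm x hx, hm y hy⟩


/-- Free groups are torsion-free. -/
lemma eq_one_of_pow_eq_one {x : FreeGroup α} {n : ℕ} (hn : n ≠ 0) (h : x ^ n = 1) :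
    x = 1 := by
  by_contra hx
  have hfin : IsOfFinOrder x := isOfFinOrder_iff_pow_eq_one.mpr ⟨n, Nat.pos_of_ne_zero hn, h⟩
  set H := Subgroup.zpowers x with hH
  have hfinH : Finite H := hfin.finite_zpowers
  let T := IsFreeGroup.Generators H
  let e : H ≃* FreeGroup T := IsFreeGroup.toFreeGroup ↥H
  have hfinT : Finite (FreeGroup T) := Finite.of_equiv _ e.toEquiv
  rcases isEmpty_or_nonempty T with hT | ⟨⟨t₀⟩⟩
  · -- H would be trivial
    have h1 : ∀ w : FreeGroup T, w = 1 := by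
      intro w
      induction w using FreeGroup.induction_on with
      | C1 => rfl
      | of y => exact (hT.false y).elim
      | inv_of y ih => rw [ih]; simp
      | mul y z ihy ihz => rw [ihy, ihz]; simp
    have : (⟨x, Subgroup.mem_zpowers x⟩ : H) = 1 := by
      apply e.injective; rw [h1 (e _), map_one]
    exact hx (by simpa using congrArg Subtype.val this)
  · -- FreeGroup T surjects onto ℤ, contradicting finiteness
    let ψ : FreeGroup T →* Multiplicative ℤ :=
      FreeGroup.lift (fun _ => Multiplicative.ofAdd (1 : ℤ))
    have hsurj : Function.Surjective ψ := by
      intro k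
      refine ⟨(FreeGroup.of t₀) ^ (Multiplicative.toAdd k), ?_⟩
      rw [map_zpow]
      simp [ψ]
      rw [← ofAdd_zsmul]
      simp
    have : Finite (Multiplicative ℤ) := Finite.of_surjective ψ hsurj
    exact not_finite (Multiplicative ℤ)

lemma eq_one_of_zpow_eq_one {x : FreeGroup α} {n : ℤ} (hn : n ≠ 0) (h : x ^ n = 1) :
    x = 1 := by
  apply eq_one_of_pow_eq_one (n := n.natAbs) (by simpa using hn)
  rcases Int.natAbs_eq n with h' | h'
  · rw [← zpow_natCast, ← h', h]
  · rw [← zpow_natCast, ← neg_neg (n.natAbs : ℤ), ← h', zpow_neg, h, inv_one]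

lemma zpow_injective {x : FreeGroup α} (hx : x ≠ 1) {a b : ℤ} (h : x ^ a = x ^ b) :
    a = b := by
  by_contra hne
  apply hx
  apply eq_one_of_zpow_eq_one (n := a - b) (sub_ne_zero.mpr hne)
  rw [zpow_sub, h, mul_inv_cancel]

/-- The counting homomorphism. -/
noncomputable def chi {T : Type*} (t₁ : T) : FreeGroup T →* Multiplicative ℤ :=
  letI := Classical.decEq T
  FreeGroup.lift (fun t => if t = t₁ then Multiplicative.ofAdd (1 : ℤ) else 1)

lemma chi_of_self {T : Type*} (t₁ : T) :
    Multiplicative.toAdd (chi t₁ (FreeGroup.of t₁)) = 1 := by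
  classical
  simp [chi]

lemma chi_of_ne {T : Type*} {t t₁ : T} (h : t ≠ t₁) :
    Multiplicative.toAdd (chi t₁ (FreeGroup.of t)) = 0 := by
  classical
  simp [chi, h]

lemma chi_zpow {T : Type*} (t₁ : T) (z : FreeGroup T) (n : ℤ) :
    Multiplicative.toAdd (chi t₁ (z ^ n)) = n * Multiplicative.toAdd (chi t₁ z) := by
  rw [map_zpow]
  simp [toAdd_zpow]

/-- If `of t₁` is a power of `z`, then everything that is a power of `z`
is a power of `of t₁`. -/
lemma mem_zpowers_of_of_mem {T : Type*} {t₁ : T} {z c : FreeGroup T}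
    (h1 : FreeGroup.of t₁ ∈ Subgroup.zpowers z) (h2 : c ∈ Subgroup.zpowers z) :
    c ∈ Subgroup.zpowers (FreeGroup.of t₁) := by
  rcases h1 with ⟨m, hm⟩
  rcases h2 with ⟨a, ha⟩
  have hcount : m * Multiplicative.toAdd (chi t₁ z) = 1 := by
    have := congrArg (fun w => Multiplicative.toAdd (chi t₁ w)) hm
    simpa [chi_zpow, chi_of_self] using this
  have hm1 : m = 1 ∨ m = -1 := Int.isUnit_iff.mp (IsUnit.of_mul_eq_one _ hcount)
  rcases hm1 with rfl | rfl
  · simp only [zpow_one] at hm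
    exact ⟨a, by rw [← hm]; exact ha⟩
  · have hz : z = (FreeGroup.of t₁)⁻¹ := by
      rw [← hm]; simp
    exact ⟨-a, by rw [← ha, hz]; simp⟩


/-- In a free group, the center is trivial once there are two distinct generators;
phrased as: a central element is 1. -/
lemma central_eq_one {T : Type*} {t₁ t₂ : T} (hne : t₁ ≠ t₂) {c : FreeGroup T}
    (hc : ∀ w : FreeGroup T, Commute c w) : c = 1 := by
  obtain ⟨z₁, hcz₁, ht₁⟩ := commute_common_root (hc (FreeGroup.of t₁))
  obtain ⟨z₂, hcz₂, ht₂⟩ := commute_common_root (hc (FreeGroup.of t₂))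
  obtain ⟨p, hp0⟩ := mem_zpowers_of_of_mem ht₁ hcz₁
  obtain ⟨q, hq0⟩ := mem_zpowers_of_of_mem ht₂ hcz₂
  have hp : FreeGroup.of t₁ ^ p = c := hp0
  have hq : FreeGroup.of t₂ ^ q = c := hq0
  have h1 : p * Multiplicative.toAdd (chi t₁ (FreeGroup.of t₁))
      = Multiplicative.toAdd (chi t₁ c) := by rw [← chi_zpow, hp]
  have h2 : q * Multiplicative.toAdd (chi t₁ (FreeGroup.of t₂))
      = Multiplicative.toAdd (chi t₁ c) := by rw [← chi_zpow, hq]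
  rw [chi_of_self] at h1
  rw [chi_of_ne hne.symm] at h2
  -- h1 : p * 1 = toAdd (chi t₁ c), h2 : q * 0 = toAdd (chi t₁ c)
  have hp0 : p = 0 := by omega
  rw [hp0, zpow_zero] at hp
  exact hp.symm

/-- The centralizer of a nontrivial element of a free group is abelian. -/
lemma centralizer_abelian {c : FreeGroup α} (hc : c ≠ 1) :
    ∀ a ∈ Subgroup.centralizer {c}, ∀ b ∈ Subgroup.centralizer {c}, Commute a b := by
  set C := Subgroup.centralizer ({c} : Set (FreeGroup α)) with hC
  have hcC : c ∈ C := by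
    rw [hC, Subgroup.mem_centralizer_iff]
    rintro h ⟨rfl⟩
    rfl
  let T := IsFreeGroup.Generators C
  let e : C ≃* FreeGroup T := IsFreeGroup.toFreeGroup ↥C
  have hsub : Subsingleton T := by
    by_contra hns
    rcases not_subsingleton_iff_nontrivial.mp hns with ⟨t₁, t₂, hne⟩
    have hcent : ∀ w : FreeGroup T, Commute (e ⟨c, hcC⟩) w := by
      intro w
      have hw2 : (e.symm w : FreeGroup α) ∈ C := (e.symm w).2
      have hcw : Commute c ((e.symm w : C) : FreeGroup α) :=
        Subgroup.mem_centralizer_iff.mp hw2 c (Set.mem_singleton c)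
      have : Commute (⟨c, hcC⟩ : C) (e.symm w) := Subtype.ext hcw
      simpa using this.map e.toMonoidHom
    have := central_eq_one hne hcent
    apply hc
    have : (⟨c, hcC⟩ : C) = 1 := by
      apply e.injective; rw [this, map_one]
    simpa using congrArg Subtype.val this
  -- C is cyclic, hence abelian
  intro a ha b hb
  rcases exists_gen_of_subsingleton T with ⟨ζ, hζ⟩
  rcases hζ (e ⟨a, ha⟩) with ⟨i, hi⟩
  rcases hζ (e ⟨b, hb⟩) with ⟨j, hj⟩
  have hcomm : Commute (e ⟨a, ha⟩) (e ⟨b, hb⟩) := by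
    rw [← hi, ← hj]; exact Commute.zpow_zpow_self ζ i j
  have : Commute (⟨a, ha⟩ : C) (⟨b, hb⟩ : C) := by
    have := hcomm.map e.symm.toMonoidHom
    simpa using this
  exact Subtype.ext_iff.mp this

/-- Unique roots in free groups. -/
lemma unique_root {x y : FreeGroup α} {n : ℕ} (hn : n ≠ 0) (h : x ^ n = y ^ n) :
    x = y := by
  by_cases hx : x = 1
  · subst hx
    exact (eq_one_of_pow_eq_one hn (by rw [← h]; simp)).symm
  · have hxn : x ^ n ≠ 1 := fun h1 => hx (eq_one_of_pow_eq_one hn h1)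
    have hyx : Commute y (x ^ n) := by
      rw [h]; exact (Commute.refl y).pow_right n
    have hxx : Commute x (x ^ n) := (Commute.refl x).pow_right n
    have hxyc : Commute x y := by
      apply centralizer_abelian hxn
      · rw [Subgroup.mem_centralizer_iff]; rintro w ⟨rfl⟩; exact hxx.symm
      · rw [Subgroup.mem_centralizer_iff]; rintro w ⟨rfl⟩; exact hyx.symm
    have : (x * y⁻¹) ^ n = 1 := by
      rw [hxyc.inv_right.mul_pow, h, inv_pow, mul_inv_cancel]
    have := eq_one_of_pow_eq_one hn this
    exact mul_inv_eq_one.mp this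

lemma unique_zroot {x y : FreeGroup α} {n : ℤ} (hn : n ≠ 0) (h : x ^ n = y ^ n) :
    x = y := by
  rcases Int.natAbs_eq n with h' | h'
  · apply unique_root (n := n.natAbs) (by simpa using hn)
    rw [← zpow_natCast, ← zpow_natCast, ← h', h]
  · have : x⁻¹ = y⁻¹ := by
      apply unique_root (n := n.natAbs) (by simpa using hn)
      rw [inv_pow, inv_pow, ← zpow_natCast, ← zpow_natCast, ← neg_neg (n.natAbs : ℤ), ← h',
        zpow_neg, zpow_neg, h]
    exact inv_injective this

lemma mem_fixed_iff {G : Type*} [Group G] (Φ : MulAut G) (x : G) :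
    x ∈ fixedSubgroup Φ ↔ Φ x = x := Iff.rfl

lemma mem_centralizer_singleton_iff {G : Type*} [Group G] {c x : G} :
    x ∈ Subgroup.centralizer {c} ↔ Commute c x := by
  rw [Subgroup.mem_centralizer_iff]
  constructor
  · intro h; exact h c (Set.mem_singleton c)
  · rintro h w ⟨rfl⟩; exact h


end FixedSubgroupAux

open FixedSubgroupAux in
/-- The fixed subgroup of an automorphism of a free group of rank at least two,
if nontrivial, is its own normalizer. -/
theorem fixedSubgroup_self_normalizing {α : Type*} [Nontrivial α]
    (Φ : MulAut (FreeGroup α)) (h : fixedSubgroup Φ ≠ ⊥) :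
    Subgroup.normalizer (fixedSubgroup Φ : Set (FreeGroup α)) = fixedSubgroup Φ := by
  set H := fixedSubgroup Φ with hHdef
  apply le_antisymm _ Subgroup.le_normalizer
  intro g hg
  rw [Subgroup.mem_normalizer_iff] at hg
  -- the element g⁻¹ * Φ g commutes with every element of H
  have hcomm : ∀ x ∈ H, Commute (g⁻¹ * Φ g) x := by
    intro x hx
    have h1 : g * x * g⁻¹ ∈ H := (hg x).mp hx
    have h2 : Φ (g * x * g⁻¹) = g * x * g⁻¹ := h1
    have h3 : Φ x = x := hx
    rw [map_mul, map_mul, map_inv, h3] at h2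
    -- h2 : Φ g * x * (Φ g)⁻¹ = g * x * g⁻¹
    rw [Commute, SemiconjBy]
    calc g⁻¹ * Φ g * x = g⁻¹ * (Φ g * x * (Φ g)⁻¹) * Φ g := by group
      _ = g⁻¹ * (g * x * g⁻¹) * Φ g := by rw [h2]
      _ = x * (g⁻¹ * Φ g) := by group
  -- get a nontrivial element of H
  obtain ⟨x₀, hx₀H, hx₀⟩ : ∃ x ∈ H, x ≠ 1 := by
    by_contra hcon
    push_neg at hcon
    exact h (Subgroup.eq_bot_iff_forall _ |>.mpr hcon)
  show Φ g = g
  by_cases habel : ∀ a ∈ H, ∀ b ∈ H, Commute a b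
  · -- abelian case
    set M := Subgroup.centralizer ({x₀} : Set (FreeGroup α)) with hM
    have hMab : ∀ a ∈ M, ∀ b ∈ M, Commute a b := centralizer_abelian hx₀
    obtain ⟨m, hmM, hgen⟩ := exists_gen_of_abelian M hMab
    have hx₀M : x₀ ∈ M := mem_centralizer_singleton_iff.mpr (Commute.refl x₀)
    obtain ⟨s, hs0⟩ := hgen x₀ hx₀M
    have hs : m ^ s = x₀ := hs0
    have hm1 : m ≠ 1 := by rintro rfl; apply hx₀; rw [← hs]; simp
    have hsne : s ≠ 0 := by rintro rfl; apply hx₀; rw [← hs]; simp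
    have hΦm : Φ m = m := by
      apply unique_zroot hsne
      rw [← map_zpow, hs]
      exact hx₀H
    have hmH : m ∈ H := hΦm
    have hHM : ∀ a ∈ H, a ∈ M := fun a ha =>
      mem_centralizer_singleton_iff.mpr ((habel a ha x₀ hx₀H).symm)
    -- g m g⁻¹ = m ^ k
    have hu : g * m * g⁻¹ ∈ H := (hg m).mp hmH
    obtain ⟨k, hk0⟩ := hgen _ (hHM _ hu)
    have hk : m ^ k = g * m * g⁻¹ := hk0
    -- g⁻¹ m g ∈ H as well
    have hv : g⁻¹ * m * g ∈ H := by
      apply (hg (g⁻¹ * m * g)).mpr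
      have : g * (g⁻¹ * m * g) * g⁻¹ = m := by group
      rw [this]; exact hmH
    obtain ⟨j, hj0⟩ := hgen _ (hHM _ hv)
    have hj : m ^ j = g⁻¹ * m * g := hj0
    have hkj : k * j = 1 := by
      have : m ^ (k * j) = m ^ (1 : ℤ) := by
        rw [zpow_one, mul_comm k j, zpow_mul, hj]
        calc (g⁻¹ * m * g) ^ k = g⁻¹ * m ^ k * g := by
              rw [show g⁻¹ * m * g = g⁻¹ * m * (g⁻¹)⁻¹ by rw [inv_inv], conj_zpow, inv_inv]
          _ = m := by rw [hk]; group
      exact zpow_injective hm1 this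
    have hk1 : k = 1 ∨ k = -1 := Int.isUnit_iff.mp (IsUnit.of_mul_eq_one _ hkj)
    have hgm : Commute g m := by
      rcases hk1 with rfl | rfl
      · rw [zpow_one] at hk
        exact mul_inv_eq_iff_eq_mul.mp hk.symm
      · -- g m g⁻¹ = m⁻¹ : derive a contradiction
        exfalso
        rw [zpow_neg_one] at hk
        have h1 : g * m * g⁻¹ = m⁻¹ := hk.symm
        have h2 : g * m⁻¹ * g⁻¹ = m := by
          rw [show g * m⁻¹ * g⁻¹ = (g * m * g⁻¹)⁻¹ by group, h1, inv_inv]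
        have hg2 : (g * g) * m * (g * g)⁻¹ = m := by
          rw [show (g * g) * m * (g * g)⁻¹ = g * (g * m * g⁻¹) * g⁻¹ by group, h1, h2]
        by_cases hgone : g = 1
        · apply hm1
          rw [hgone] at hk
          simp at hk
          have : m ^ (1:ℤ) = m ^ (-1:ℤ) := by simp [hk]
          have := zpow_injective hm1 this
          omega
        · have hg2ne : g * g ≠ 1 := by
            intro hcon
            apply hgone
            apply eq_one_of_pow_eq_one (n := 2) (by norm_num)
            rw [pow_two]; exact hcon
          have hcomm2 : Commute g m := by
            have hgc : g ∈ Subgroup.centralizer ({g * g} : Set (FreeGroup α)) :=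
              mem_centralizer_singleton_iff.mpr ((Commute.refl g).mul_left (Commute.refl g))
            have hmc : m ∈ Subgroup.centralizer ({g * g} : Set (FreeGroup α)) := by
              apply mem_centralizer_singleton_iff.mpr
              rw [Commute, SemiconjBy]
              calc (g * g) * m = ((g * g) * m * (g * g)⁻¹) * (g * g) := by group
                _ = m * (g * g) := by rw [hg2]
            exact centralizer_abelian hg2ne g hgc m hmc
          have : m⁻¹ = m := by
            rw [hk, hcomm2.eq]; group
          apply hm1
          have : m ^ (-1 : ℤ) = m ^ (1 : ℤ) := by simpa using this
          have := zpow_injective hm1 this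
          omega
    obtain ⟨w, hgw, hmw⟩ := commute_common_root hgm
    obtain ⟨p, hp0⟩ := hgw
    obtain ⟨q, hq0⟩ := hmw
    have hp : w ^ p = g := hp0
    have hq : w ^ q = m := hq0
    have hqne : q ≠ 0 := by rintro rfl; apply hm1; rw [← hq]; simp
    have hΦw : Φ w = w := by
      apply unique_zroot hqne
      rw [← map_zpow, hq]
      exact hΦm
    rw [← hp, map_zpow, hΦw]
  · -- nonabelian case: g⁻¹ * Φ g = 1
    push_neg at habel
    obtain ⟨a, haH, b, hbH, hab⟩ := habel
    have hc : g⁻¹ * Φ g = 1 := by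
      by_contra hcne
      apply hab
      apply centralizer_abelian hcne
      · exact mem_centralizer_singleton_iff.mpr (hcomm a haH)
      · exact mem_centralizer_singleton_iff.mpr (hcomm b hbH)
    exact (inv_mul_eq_one.mp hc).symm
end

section
/- Let F be a free group and H a nontrivial finitely generated subgroup of F. Then H has finite index in its normalizer N_F(H); equivalently, the quotient group N_F(H)/H at the level of index, [N_F(H) : H], is finite. -/
set_option linter.unusedSectionVars false

open List

namespace KSaux

open FreeGroup

section Words

variable {α : Type*} [DecidableEq α]

/-- A word is reduced if no adjacent pair cancels. -/
def Reduced (L : List (α × Bool)) : Prop :=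
  List.Chain' (fun a b => ¬(a.1 = b.1 ∧ a.2 = !b.2)) L

theorem reduced_reduce (L : List (α × Bool)) : Reduced (reduce L) := by
  induction L with
  | nil => exact List.isChain_nil
  | cons x L ih =>
    rw [reduce.cons]
    rcases h : reduce L with _ | ⟨y, tl⟩
    · exact List.isChain_singleton x
    · rw [h] at ih
      by_cases hc : x.1 = y.1 ∧ x.2 = !y.2
      · simp only [hc, if_true]
        exact ih.tail
      · simp only [hc, if_false]
        exact ih.cons (by simpa using hc)

theorem Reduced.reduce_eq {L : List (α × Bool)} (h : Reduced L) : reduce L = L := by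
  induction L with
  | nil => rfl
  | cons x L ih =>
    have hL : Reduced L := h.tail
    rw [reduce.cons, ih hL]
    rcases hL' : L with _ | ⟨y, tl⟩
    · rfl
    · have hxy : ¬(x.1 = y.1 ∧ x.2 = !y.2) := by
        rw [hL'] at h
        exact (List.isChain_cons_cons.mp h).1
      simp only [hxy, if_false]

theorem reduced_toWord (x : FreeGroup α) : Reduced (toWord x) := by
  rw [← reduce_toWord]; exact reduced_reduce _

theorem toWord_mk_reduced {L : List (α × Bool)} (h : Reduced L) : toWord (mk L) = L := by
  rw [toWord_mk, h.reduce_eq]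

theorem Reduced.prefix {L P : List (α × Bool)} (h : Reduced L) (hp : P <+: L) : Reduced P :=
  List.IsChain.prefix h hp

theorem invRev_append (L₁ L₂ : List (α × Bool)) :
    invRev (L₁ ++ L₂) = invRev L₂ ++ invRev L₁ := by
  simp [invRev]

theorem invRev_cons (x : α × Bool) (L : List (α × Bool)) :
    invRev (x :: L) = invRev L ++ [(x.1, !x.2)] := by
  simp [invRev]

/-- Cancellation lemma at the level of words. -/
theorem exists_cancel :
    ∀ (a b : List (α × Bool)), Reduced a → Reduced b →
      ∃ p c q, a = p ++ c ∧ b = invRev c ++ q ∧ reduce (a ++ b) = p ++ q := by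
  intro a
  induction a using List.reverseRecOn with
  | nil =>
    intro b _ hb
    exact ⟨[], [], b, rfl, by simp [invRev], by simpa using hb.reduce_eq⟩
  | append_singleton a' x ih =>
    intro b ha hb
    rcases hbe : b with _ | ⟨y, b'⟩
    · refine ⟨a' ++ [x], [], [], by simp, by simp [invRev], ?_⟩
      simpa using ha.reduce_eq
    · by_cases hc : y.1 = x.1 ∧ y.2 = !x.2
      · -- cancellation between x and y
        have hy : y = (x.1, !x.2) := Prod.ext hc.1 hc.2
        have ha' : Reduced a' := ha.prefix ⟨[x], rfl⟩
        have hb' : Reduced b' := by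
          rw [hbe] at hb; exact hb.tail
        obtain ⟨p, c, q, h1, h2, h3⟩ := ih b' ha' hb'
        have hstep : Red.Step (a' ++ [x] ++ y :: b') (a' ++ b') := by
          have : a' ++ [x] ++ y :: b' = a' ++ (x.1, x.2) :: (x.1, !x.2) :: b' := by
            rw [hy]; simp
          rw [this]
          exact Red.Step.not
        have hred : reduce (a' ++ [x] ++ y :: b') = reduce (a' ++ b') :=
          reduce.Step.eq hstep
        refine ⟨p, c ++ [x], q, ?_, ?_, ?_⟩
        · rw [h1]; simp
        · rw [invRev_append, hy]
          simp only [List.append_assoc]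
          rw [h2]
          simp [invRev]
        · rw [hred, h3]
      · -- no cancellation: everything is reduced
        have hred : Reduced (a' ++ [x] ++ y :: b') := by
          have : a' ++ [x] ++ y :: b' = (a' ++ [x]) ++ (y :: b') := by simp
          rw [this]
          refine List.IsChain.append ha (hbe ▸ hb) ?_
          intro p hp q hq
          simp only [List.getLast?_concat, Option.mem_def, Option.some.injEq] at hp
          simp only [List.head?_cons, Option.mem_def, Option.some.injEq] at hq
          subst hp; subst hq
          intro hcon
          exact hc ⟨hcon.1.symm, by rw [hcon.2]; simp⟩
        exact ⟨a' ++ [x], [], y :: b', by simp, by simp [invRev], by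
          simpa using hred.reduce_eq⟩

/-- Cancellation lemma at the level of group elements. -/
theorem exists_cancel' (x y : FreeGroup α) :
    ∃ p c q, toWord x = p ++ c ∧ toWord y = invRev c ++ q ∧ toWord (x * y) = p ++ q := by
  obtain ⟨p, c, q, h1, h2, h3⟩ :=
    exists_cancel (toWord x) (toWord y) (reduced_toWord x) (reduced_toWord y)
  refine ⟨p, c, q, h1, h2, ?_⟩
  have : x * y = mk (toWord x ++ toWord y) := by
    rw [← mul_mk, mk_toWord, mk_toWord]
  rw [this, toWord_mk, h3]


/-- Any prefix of the reduced word of `x*y` is, modulo left multiplication by `x`,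
a prefix of the word of `x` or of the word of `y`. -/
theorem prefix_mul {x y : FreeGroup α} {P : List (α × Bool)}
    (h : P <+: toWord (x * y)) :
    (∃ Q, Q <+: toWord x ∧ mk P = mk Q) ∨ (∃ Q, Q <+: toWord y ∧ mk P = x * mk Q) := by
  obtain ⟨p, c, q, h1, h2, h3⟩ := exists_cancel' x y
  rw [h3] at h
  by_cases hl : P.length ≤ p.length
  · left
    have hP : P <+: p := List.prefix_of_prefix_length_le h (List.prefix_append p q) hl
    exact ⟨P, hP.trans ⟨c, h1.symm⟩, rfl⟩
  · right
    have hpP : p <+: P :=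
      List.prefix_of_prefix_length_le (List.prefix_append p q) h (le_of_not_ge hl)
    obtain ⟨t, rfl⟩ := hpP
    have ht : t <+: q := (List.prefix_append_right_inj p).mp h
    refine ⟨invRev c ++ t, ?_, ?_⟩
    · rw [h2]
      exact (List.prefix_append_right_inj (invRev c)).mpr ht
    · have hx : x = mk p * mk c := by rw [mul_mk, ← h1, mk_toWord]
      rw [hx, ← mul_mk, ← mul_mk, ← inv_mk, mul_assoc, mul_inv_cancel_left]

theorem quasiconvex (S : Set (FreeGroup α)) (Lb : ℕ)
    (hS : ∀ s ∈ S, (toWord s).length ≤ Lb) :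
    ∀ (l : List (FreeGroup α)), (∀ z ∈ l, z ∈ S ∨ z⁻¹ ∈ S) →
      ∀ P, P <+: toWord l.prod →
        ∃ k ∈ Subgroup.closure S, ∃ Q : List (α × Bool), Q.length ≤ Lb ∧ mk P = k * mk Q := by
  intro l
  induction l with
  | nil =>
    intro _ P hP
    simp only [List.prod_nil, toWord_one] at hP
    have : P = [] := List.eq_nil_of_prefix_nil hP
    subst this
    exact ⟨1, one_mem _, [], Nat.zero_le _, by rw [one_mul]⟩
  | cons z l ih =>
    intro hmem P hP
    rw [List.prod_cons] at hP
    rcases prefix_mul hP with ⟨Q, hQ, hPQ⟩ | ⟨Q, hQ, hPQ⟩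
    · refine ⟨1, one_mem _, Q, ?_, by rw [one_mul, hPQ]⟩
      have hle : Q.length ≤ (toWord z).length := hQ.length_le
      rcases hmem z (List.mem_cons_self (a := z) (l := l)) with hz | hz
      · exact hle.trans (hS z hz)
      · have heq : (toWord z⁻¹).length = (toWord z).length := by
          rw [toWord_inv, invRev_length]
        exact hle.trans (heq ▸ hS _ hz)
    · obtain ⟨k, hk, Q', hQ', hkQ'⟩ := ih (fun w hw => hmem w (List.mem_cons_of_mem _ hw)) Q hQ
      have hz : z ∈ Subgroup.closure S := by
        rcases hmem z (List.mem_cons_self (a := z) (l := l)) with hz | hz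
        · exact Subgroup.subset_closure hz
        · simpa using inv_mem (Subgroup.subset_closure hz)
      exact ⟨z * k, mul_mem hz hk, Q', hQ', by rw [hPQ, hkQ', mul_assoc]⟩


/-- The key combinatorial step: if `g` is a shortest element in its left coset `gK`, and
`u ∈ K` is nontrivial, then most of the word of `g` survives as a prefix of `g * u * g⁻¹`. -/
theorem min_rep_step (K : Subgroup (FreeGroup α)) (u g : FreeGroup α)
    (hu : u ∈ K) (hu1 : u ≠ 1)
    (hmin : ∀ k ∈ K, (toWord g).length ≤ (toWord (g * k)).length) :
    ∃ g₁ c, toWord g = g₁ ++ c ∧ c.length ≤ (toWord u).length ∧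
      g₁ <+: toWord (g * u * g⁻¹) := by
  obtain ⟨g₁, c, u₂, hg, hu2, hgu⟩ := exists_cancel' g u
  have hlen1 : c.length ≤ u₂.length := by
    have h1 := hmin u hu
    rw [hg, hgu] at h1
    simp only [List.length_append] at h1
    omega
  have hcu : c.length ≤ (toWord u).length := by
    rw [hu2]; simp only [List.length_append]; omega
  obtain ⟨A, e, B, hgu2, hginv, hw⟩ := exists_cancel' (g * u) g⁻¹
  refine ⟨g₁, c, hg, hcu, ?_⟩
  by_cases he : e.length ≤ u₂.length
  · -- good case: g₁ is a prefix of A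
    have hg1A : g₁ <+: A := by
      have h1 : g₁ <+: (g * u).toWord := by rw [hgu]; exact List.prefix_append g₁ u₂
      have h2 : A <+: (g * u).toWord := by rw [hgu2]; exact List.prefix_append A e
      have hl : g₁.length + u₂.length = A.length + e.length := by
        have h4 := congrArg List.length (hgu.symm.trans hgu2)
        simpa using h4
      exact List.prefix_of_prefix_length_le h1 h2 (by omega)
    rw [hw]
    exact hg1A.trans (List.prefix_append A B)
  · -- impossible case
    exfalso
    push_neg at he
    -- u₂ is a suffix of e
    have hu₂e : u₂ <:+ e := by
      have h1 : u₂ <:+ (g * u).toWord := by rw [hgu]; exact List.suffix_append g₁ u₂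
      have h2 : e <:+ (g * u).toWord := by rw [hgu2]; exact List.suffix_append A e
      exact List.suffix_of_suffix_length_le h1 h2 (le_of_lt he)
    -- e is a suffix of toWord g
    have hge : toWord g = invRev B ++ e := by
      have h := hginv
      rw [toWord_inv] at h
      have := congrArg invRev h
      rwa [invRev_invRev, invRev_append, invRev_invRev] at this
    have hu₂g : u₂ <:+ toWord g := hu₂e.trans ⟨invRev B, hge.symm⟩
    obtain ⟨X, hX⟩ := hu₂g
    -- compute g * u⁻¹
    have hginv' : g * u⁻¹ = mk (X ++ c) := by
      have hgmk : g = mk (X ++ u₂) := ((congrArg mk hX).trans mk_toWord).symm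
      have humk : u⁻¹ = mk (invRev u₂ ++ c) := by
        rw [← mk_toWord (x := u), hu2, inv_mk, invRev_append, invRev_invRev]
      rw [hgmk, humk, ← mul_mk, ← mul_mk, ← mul_mk, ← inv_mk, mul_assoc,
        mul_inv_cancel_left, mul_mk]
    have hmin' := hmin u⁻¹ (inv_mem hu)
    rw [hginv'] at hmin'
    have hlen2 : (toWord (mk (X ++ c))).length ≤ X.length + c.length := by
      have h5 : FreeGroup.norm (mk (X ++ c)) ≤ (X ++ c).length := norm_mk_le
      simpa [FreeGroup.norm, List.length_append] using h5
    have hglen : (toWord g).length = X.length + u₂.length := by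
      rw [← hX]; simp
    -- so u₂.length ≤ c.length, hence equal
    have hlen3 : u₂.length ≤ c.length := by omega
    have hlen4 : c.length = u₂.length := le_antisymm hlen1 hlen3
    -- c and u₂ are suffixes of toWord g of the same length, so equal
    have hcg : c <:+ toWord g := ⟨g₁, hg.symm⟩
    have hceq : c = u₂ := by
      have h1 : c <:+ u₂ := List.suffix_of_suffix_length_le hcg ⟨X, hX⟩ (le_of_eq hlen4)
      exact List.IsSuffix.eq_of_length h1 hlen4
    -- then toWord u = invRev u₂ ++ u₂ is not reduced
    have hu2ne : u₂ ≠ [] := by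
      intro h0
      refine hu1 (toWord_eq_nil_iff.mp ?_)
      rw [hu2, hceq, h0]
      simp [invRev]
    obtain ⟨z, t, rfl⟩ := List.exists_cons_of_ne_nil hu2ne
    have hred : Reduced (toWord u) := reduced_toWord u
    rw [hu2, hceq, invRev_cons] at hred
    have : List.Chain' (fun a b => ¬(a.1 = b.1 ∧ a.2 = !b.2)) ((z.1, !z.2) :: z :: t) := by
      apply hred.suffix
      refine ⟨invRev t, ?_⟩
      simp
    have := (List.isChain_cons_cons.mp this).1
    exact this ⟨rfl, by simp⟩


theorem mem_closure_list {G : Type*} [Group G] {S : Set G} {x : G}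
    (h : x ∈ Subgroup.closure S) :
    ∃ l : List G, (∀ z ∈ l, z ∈ S ∨ z⁻¹ ∈ S) ∧ l.prod = x := by
  have h' : x ∈ Submonoid.closure (S ∪ S⁻¹) := by
    rw [← Subgroup.closure_toSubmonoid]
    exact h
  obtain ⟨l, h1, h2⟩ := Submonoid.exists_list_of_mem_closure h'
  refine ⟨l, fun z hz => ?_, h2⟩
  rcases h1 z hz with hz' | hz'
  · exact Or.inl hz'
  · exact Or.inr (Set.mem_inv.mp hz')

/-- Every left coset of a nontrivial finitely generated normal subgroup
has a representative of bounded length. -/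
theorem exists_short_rep (K : Subgroup (FreeGroup α)) (hn : K.Normal)
    (u : FreeGroup α) (hu : u ∈ K) (hu1 : u ≠ 1)
    (S : Set (FreeGroup α)) (hSK : Subgroup.closure S = K) (Lb : ℕ)
    (hS : ∀ s ∈ S, (toWord s).length ≤ Lb) (g : FreeGroup α) :
    ∃ v : FreeGroup α, (toWord v).length ≤ Lb + (toWord u).length ∧ g⁻¹ * v ∈ K := by
  -- choose a shortest representative of the coset gK
  have hne : ∃ n, ∃ h : FreeGroup α, g⁻¹ * h ∈ K ∧ (toWord h).length = n :=
    ⟨(toWord g).length, g, by simp [one_mem], rfl⟩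
  classical
  let n := Nat.find hne
  obtain ⟨g₀, hg₀K, hg₀len⟩ := Nat.find_spec hne
  have hmin : ∀ k ∈ K, (toWord g₀).length ≤ (toWord (g₀ * k)).length := by
    intro k hk
    have : g⁻¹ * (g₀ * k) ∈ K := by
      rw [← mul_assoc]
      exact mul_mem hg₀K hk
    have h7 : Nat.find hne ≤ (toWord (g₀ * k)).length :=
      Nat.find_min' hne ⟨g₀ * k, this, rfl⟩
    omega
  obtain ⟨g₁, c, hg, hc, hpre⟩ := min_rep_step K u g₀ hu hu1 hmin
  have hw : g₀ * u * g₀⁻¹ ∈ K := hn.conj_mem u hu g₀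
  obtain ⟨l, hl, hlp⟩ := mem_closure_list (S := S) (by rw [hSK]; exact hw)
  obtain ⟨k, hk, Q, hQ, hmkQ⟩ := quasiconvex S Lb hS l hl g₁ (by rw [hlp]; exact hpre)
  rw [hSK] at hk
  refine ⟨mk (Q ++ c), ?_, ?_⟩
  · have h5 : FreeGroup.norm (mk (Q ++ c)) ≤ (Q ++ c).length := norm_mk_le
    simp only [FreeGroup.norm, List.length_append] at h5
    omega
  · have hg₀ : g₀ = k * mk (Q ++ c) := by
      rw [← mul_mk, ← mul_assoc, ← hmkQ, mul_mk, ← hg, mk_toWord]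
    have h6 : g₀⁻¹ * mk (Q ++ c) ∈ K := by
      rw [hg₀]
      have : (k * mk (Q ++ c))⁻¹ * mk (Q ++ c)
          = (mk (Q ++ c))⁻¹ * k⁻¹ * mk (Q ++ c) := by group
      rw [this]
      have : (mk (Q ++ c))⁻¹ * k⁻¹ * mk (Q ++ c) ∈ K := by
        have := hn.conj_mem k⁻¹ (inv_mem hk) (mk (Q ++ c))⁻¹
        simpa [mul_assoc] using this
      exact this
    have : g⁻¹ * mk (Q ++ c) = (g⁻¹ * g₀) * (g₀⁻¹ * mk (Q ++ c)) := by group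
    rw [this]
    exact mul_mem hg₀K h6
end Words

/-- Karrass–Solitar for `FreeGroup β`: a nontrivial finitely generated normal subgroup
has finite index. -/
theorem KS_free {β : Type*} (K : Subgroup (FreeGroup β)) (hn : K.Normal)
    (hne : K ≠ ⊥) (hfg : K.FG) : K.FiniteIndex := by
  classical
  obtain ⟨S, hSK⟩ := hfg
  obtain ⟨a, ha⟩ := Subgroup.ne_bot_iff_exists_ne_one.mp hne
  set u : FreeGroup β := (a : FreeGroup β) with hudef
  have hu : u ∈ K := a.2
  have hu1 : u ≠ 1 := by
    intro h
    exact ha (Subtype.ext (by rw [← hudef]; simpa using h))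
  -- the alphabet is finite
  let allowed : Finset β := S.biUnion fun s => ((toWord s).map Prod.fst).toFinset
  have hKall : ∀ k ∈ K, ∀ p ∈ toWord k, p.1 ∈ allowed := by
    have : K ≤ {
        carrier := {g : FreeGroup β | ∀ p ∈ toWord g, p.1 ∈ allowed}
        one_mem' := by simp
        mul_mem' := by
          intro x y hx hy p hp
          have hsub := FreeGroup.toWord_mul_sublist x y
          rcases List.mem_append.mp (hsub.mem hp) with h | h
          · exact hx p h
          · exact hy p h
        inv_mem' := by
          intro x hx p hp
          rw [FreeGroup.toWord_inv] at hp
          simp only [FreeGroup.invRev, List.mem_reverse, List.mem_map] at hp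
          obtain ⟨q, hq, rfl⟩ := hp
          exact hx q hq } := by
      rw [← hSK]
      rw [Subgroup.closure_le]
      intro s hs p hp
      simp only [allowed, Finset.mem_biUnion, List.mem_toFinset, List.mem_map]
      exact ⟨s, hs, p, hp, rfl⟩
    exact fun k hk => this hk
  have hall : ∀ x : β, x ∈ allowed := by
    intro x
    by_contra hx
    have hw : FreeGroup.of x * u * (FreeGroup.of x)⁻¹ ∈ K := hn.conj_mem u hu (FreeGroup.of x)
    have hulet : ∀ p ∈ toWord u, p.1 ∈ allowed := hKall u hu
    have hUne : toWord u ≠ [] := fun h => hu1 (toWord_eq_nil_iff.mp h)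
    obtain ⟨z, U', hU⟩ := List.exists_cons_of_ne_nil hUne
    have hredU : Reduced (toWord u) := reduced_toWord u
    have hred : Reduced ((x, true) :: (toWord u ++ [(x, false)])) := by
      rw [hU]
      refine List.isChain_cons_cons.mpr ⟨?_, ?_⟩
      · intro hcon
        have hz : z.1 ∈ allowed := hulet z (hU ▸ List.mem_cons_self (a := z) (l := U'))
        simp only at hcon
        rw [← hcon.1] at hz
        exact hx hz
      · refine List.IsChain.append (hU ▸ hredU) (List.isChain_singleton _) ?_
        intro p hp q hq
        simp only [List.head?_cons, Option.mem_def, Option.some.injEq] at hq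
        subst hq
        obtain ⟨h9, h10⟩ := List.mem_getLast?_eq_getLast hp
        have hpmem : p ∈ toWord u := by
          rw [h10, hU]
          exact List.getLast_mem h9
        intro hcon
        have := hulet p hpmem
        rw [hcon.1] at this
        exact hx this
    have hwmk : FreeGroup.of x * u * (FreeGroup.of x)⁻¹
        = mk ((x, true) :: (toWord u ++ [(x, false)])) := by
      have h2 : (FreeGroup.of x)⁻¹ = mk [(x, false)] := by
        rw [show FreeGroup.of x = mk [(x, true)] from rfl, inv_mk]; rfl
      rw [h2, show FreeGroup.of x = mk [(x, true)] from rfl]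
      conv_lhs => rw [← mk_toWord (x := u)]
      rw [mul_mk, mul_mk]
      simp
    have hxword : (x, true) ∈ toWord (FreeGroup.of x * u * (FreeGroup.of x)⁻¹) := by
      rw [hwmk, toWord_mk_reduced hred]
      exact List.mem_cons_self
    have := hKall _ hw (x, true) hxword
    exact hx this
  -- β is finite
  have hfinβ : Finite β := by
    refine Finite.of_injective (fun b : β => (⟨b, hall b⟩ : {y // y ∈ allowed})) ?_
    intro b₁ b₂ h
    simpa using congrArg Subtype.val h
  -- every coset has a representative of bounded length
  let Lb := S.sup fun s => (toWord s).length
  have hS : ∀ s ∈ (S : Set (FreeGroup β)), (toWord s).length ≤ Lb :=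
    fun s hs => Finset.le_sup (f := fun s => (toWord s).length) hs
  let C := Lb + (toWord u).length
  have hfin : Finite (FreeGroup β ⧸ K) := by
    have hfinlist : Finite {L : List (β × Bool) // L.length ≤ C} := by
      have : Finite (β × Bool) := by
        have := hfinβ
        infer_instance
      exact (List.finite_length_le (β × Bool) C).to_subtype
    refine Finite.of_surjective
      (fun L : {L : List (β × Bool) // L.length ≤ C} =>
        (QuotientGroup.mk (mk L.1) : FreeGroup β ⧸ K)) ?_
    intro q
    induction q using QuotientGroup.induction_on with
    | H g =>
      obtain ⟨v, hv1, hv2⟩ := exists_short_rep K hn u hu hu1 S hSK Lb hS g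
      refine ⟨⟨toWord v, hv1⟩, ?_⟩
      show (QuotientGroup.mk (mk (toWord v)) : FreeGroup β ⧸ K) = QuotientGroup.mk g
      rw [mk_toWord]
      exact (QuotientGroup.eq.mpr hv2).symm
  exact Subgroup.finiteIndex_of_finite_quotient (H := K)


end KSaux

namespace KSaux

/-- Karrass–Solitar for an arbitrary free group. -/
theorem KS_gen {G : Type*} [Group G] [IsFreeGroup G] (K : Subgroup G) (hn : K.Normal)
    (hne : K ≠ ⊥) (hfg : K.FG) : K.FiniteIndex := by
  let e : G ≃* FreeGroup (IsFreeGroup.Generators G) := IsFreeGroup.toFreeGroup G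
  let K' : Subgroup (FreeGroup (IsFreeGroup.Generators G)) := K.map e.toMonoidHom
  have hn' : K'.Normal := hn.map e.toMonoidHom e.surjective
  have hne' : K' ≠ ⊥ := by
    intro h
    have h2 := (Subgroup.map_eq_bot_iff_of_injective (H := K)
      (f := e.toMonoidHom) e.injective).mp h
    exact hne h2
  have hfg' : K'.FG := by
    obtain ⟨T, hT⟩ := hfg
    classical
    refine ⟨T.image e, ?_⟩
    have h3 : Subgroup.closure (⇑e.toMonoidHom '' ↑T) = K' := by
      rw [← MonoidHom.map_closure, hT]
    rw [Finset.coe_image]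
    simpa using h3
  have hfi : K'.FiniteIndex := KS_free K' hn' hne' hfg'
  have hcomap : K'.comap e.toMonoidHom = K :=
    Subgroup.comap_map_eq_self_of_injective e.injective K
  have hidx : K.index = K'.index := by
    rw [← hcomap]
    exact Subgroup.index_comap_of_surjective K' e.surjective
  exact ⟨by rw [hidx]; exact hfi.index_ne_zero⟩


end KSaux

/-- A nontrivial finitely generated subgroup of a free group has finite index in
its normalizer. -/
theorem finiteIndex_in_normalizer {α : Type*} (H : Subgroup (FreeGroup α))
    (hne : H ≠ ⊥) (hfg : H.FG) :
    (H.subgroupOf (Subgroup.normalizer (H : Set (FreeGroup α)))).FiniteIndex := by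
  set N := Subgroup.normalizer (H : Set (FreeGroup α)) with hN
  have hle : H ≤ N := Subgroup.le_normalizer
  set K : Subgroup ↥N := H.subgroupOf N with hK
  have hn : K.Normal := Subgroup.normal_in_normalizer
  have hKne : K ≠ ⊥ := by
    obtain ⟨a, ha⟩ := Subgroup.ne_bot_iff_exists_ne_one.mp hne
    rw [Subgroup.ne_bot_iff_exists_ne_one]
    refine ⟨⟨⟨(a : FreeGroup α), hle a.2⟩, ?_⟩, ?_⟩
    · exact (Subgroup.mem_subgroupOf).mpr a.2
    · intro h
      apply ha
      have h2 := congrArg (Subtype.val ∘ Subtype.val) h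
      exact Subtype.ext h2
  have hKfg : K.FG := by
    haveI : Group.FG ↥H := (Group.fg_iff_subgroup_fg H).mpr hfg
    have e : ↥K ≃* ↥H := Subgroup.subgroupOfEquivOfLe hle
    haveI : Group.FG ↥K := Group.fg_of_surjective (f := e.symm.toMonoidHom) e.symm.surjective
    exact (Group.fg_iff_subgroup_fg K).mp inferInstance
  exact KSaux.KS_gen K hn hKne hKfg
end

section
/- Let F be a finitely generated free group and let K ≤ H ≤ F with K and H finitely generated. Then there are only finitely many H-conjugacy classes of subgroups L ≤ H such that L is conjugate to K in F; i.e. the set { [L]_H : L ≤ H and gKg⁻¹ = L for some g ∈ F } of H-conjugacy classes is finite. -/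
set_option linter.unusedSectionVars false
namespace StallingsAux
open FreeGroup List

variable {α : Type*} [DecidableEq α]

/-- the "no cancellation" relation between adjacent letters -/
def Rd (a b : α × Bool) : Prop := ¬(a.1 = b.1 ∧ a.2 = !b.2)

/-- a word is reduced -/
def Reduced (w : List (α × Bool)) : Prop := List.Chain' Rd w

theorem reduced_reduce (L : List (α × Bool)) : Reduced (reduce L) := by
  induction L with
  | nil => exact List.isChain_nil
  | cons x L ih =>
    rw [reduce.cons]
    rcases hL : reduce L with _ | ⟨y, ys⟩
    · exact List.isChain_singleton _
    · rw [hL] at ih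
      by_cases hxy : x.1 = y.1 ∧ x.2 = !y.2
      · simp only [if_pos hxy]
        exact ih.tail
      · simp only [if_neg hxy]
        exact List.IsChain.cons_cons hxy ih

theorem reduced_toWord (x : FreeGroup α) : Reduced (toWord x) := by
  rw [← reduce_toWord]; exact reduced_reduce _

theorem Reduced.not_step {w L : List (α × Bool)} (h : Reduced w) : ¬ Red.Step w L := by
  intro hs
  cases hs with
  | @not L₁ L₂ x b =>
    have := (List.isChain_append_cons_cons.1 h).2.1
    exact this ⟨rfl, by simp⟩

theorem Reduced.reduce_eq {w : List (α × Bool)} (h : Reduced w) : reduce w = w := by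
  have hr : Red w (reduce w) := reduce.red
  rcases Relation.ReflTransGen.cases_head hr with h1 | ⟨c, hc, _⟩
  · exact h1.symm
  · exact absurd hc h.not_step

theorem Reduced.toWord_mk {w : List (α × Bool)} (h : Reduced w) : (mk w).toWord = w := by
  rw [FreeGroup.toWord_mk, h.reduce_eq]

theorem Reduced.norm_mk {w : List (α × Bool)} (h : Reduced w) : FreeGroup.norm (mk w) = w.length := by
  rw [FreeGroup.norm, h.toWord_mk]

/-- Lemma B : if norms add, words concatenate -/
theorem toWord_mul_of_norm {x y : FreeGroup α} (h : FreeGroup.norm (x * y) = FreeGroup.norm x + FreeGroup.norm y) :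
    (x * y).toWord = x.toWord ++ y.toWord := by
  have hxy : x * y = mk (x.toWord ++ y.toWord) := by rw [← mul_mk, mk_toWord, mk_toWord]
  have hred : Red (x.toWord ++ y.toWord) ((x * y).toWord) := by
    rw [hxy, FreeGroup.toWord_mk]; exact reduce.red
  have hsl : (x * y).toWord <+ x.toWord ++ y.toWord := hred.sublist
  have hlen : ((x * y).toWord).length = (x.toWord ++ y.toWord).length := by
    simpa [FreeGroup.norm, List.length_append] using h
  exact hsl.eq_of_length hlen


/-- norm as word length, abbreviation -/
abbrev nw (x : FreeGroup α) : ℕ := x.toWord.length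

theorem nw_inv (x : FreeGroup α) : nw x⁻¹ = nw x := FreeGroup.norm_inv_eq

theorem nw_mul_le (x y : FreeGroup α) : nw (x * y) ≤ nw x + nw y := FreeGroup.norm_mul_le x y

theorem nw_eq_zero {x : FreeGroup α} : nw x = 0 ↔ x = 1 := FreeGroup.norm_eq_zero

/-- Lemma C : maximal cancellation in a product -/
theorem exists_cancel_aux : ∀ (n : ℕ) (x y : FreeGroup α), nw x ≤ n →
    ∃ a c b : FreeGroup α, x = a * c ∧ y = c⁻¹ * b ∧
      nw x = nw a + nw c ∧ nw y = nw c + nw b ∧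
      (x * y).toWord = a.toWord ++ b.toWord := by
  intro n
  induction n with
  | zero =>
    intro x y hx
    have hx1 : x = 1 := nw_eq_zero.1 (Nat.le_zero.1 hx)
    exact ⟨1, 1, y, by simp [hx1], by simp, by simp [hx1], by simp, by simp [hx1]⟩
  | succ n ih =>
    intro x y hx
    by_cases hred : Reduced (x.toWord ++ y.toWord)
    · refine ⟨x, 1, y, by simp, by simp, by simp, by simp, ?_⟩
      have hxy : x * y = mk (x.toWord ++ y.toWord) := by rw [← mul_mk, mk_toWord, mk_toWord]
      rw [hxy, hred.toWord_mk]
    · have redX : Reduced x.toWord := reduced_toWord x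
      have redY : Reduced y.toWord := reduced_toWord y
      have hj : ¬ ∀ zx ∈ x.toWord.getLast?, ∀ zy ∈ y.toWord.head?, Rd zx zy :=
        fun hj => hred (List.isChain_append.2 ⟨redX, redY, hj⟩)
      push_neg at hj
      obtain ⟨zx, hzx, zy, hzy, hR⟩ := hj
      rw [Rd, not_not] at hR
      have hXne : x.toWord ≠ [] := by rintro h; rw [h] at hzx; simp at hzx
      have hYne : y.toWord ≠ [] := by rintro h; rw [h] at hzy; simp at hzy
      have hzx' : x.toWord.getLast hXne = zx := by
        rw [List.getLast?_eq_getLast hXne, Option.mem_some_iff] at hzx; exact hzx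
      have hzy' : y.toWord.head hYne = zy := by
        rw [List.head?_eq_head hYne, Option.mem_some_iff] at hzy; exact hzy
      have hXsplit : x.toWord.dropLast ++ [zx] = x.toWord := by
        rw [← hzx']; exact List.dropLast_append_getLast hXne
      have hYsplit : zy :: y.toWord.tail = y.toWord := by
        rw [← hzy']; exact List.cons_head_tail hYne
      set x' : FreeGroup α := mk x.toWord.dropLast with hx'def
      set u : FreeGroup α := mk [zx] with hudef
      set y' : FreeGroup α := mk y.toWord.tail with hy'def
      have redX' : Reduced x.toWord.dropLast := redX.prefix (List.dropLast_prefix _)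
      have redY' : Reduced y.toWord.tail := redY.tail
      have hxu : x = x' * u := by rw [hx'def, hudef, mul_mk, hXsplit, mk_toWord]
      have hzyzx : zy = (zx.1, !zx.2) := by
        have h2 : zy.2 = !zx.2 := by rw [hR.2, Bool.not_not]
        exact Prod.ext hR.1.symm h2
      have huzy : mk [zy] = u⁻¹ := by
        rw [hudef, inv_mk, hzyzx]
        simp [invRev]
      have hyy : y = u⁻¹ * y' := by
        rw [← huzy, hy'def, mul_mk, List.singleton_append, hYsplit, mk_toWord]
      have hx'w : x'.toWord = x.toWord.dropLast := redX'.toWord_mk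
      have hy'w : y'.toWord = y.toWord.tail := redY'.toWord_mk
      have hx'len : nw x' ≤ n := by
        have h1 : x.toWord.length ≤ n + 1 := hx
        have h2 : x.toWord.length ≠ 0 := by simpa using hXne
        have : nw x' = x.toWord.length - 1 := by rw [nw, hx'w, List.length_dropLast]
        omega
      have hxyeq : x * y = x' * y' := by rw [hxu, hyy]; group
      obtain ⟨a, c', b, h1, h2, h3, h4, h5⟩ := ih x' y' hx'len
      have hx'toW : x'.toWord = a.toWord ++ c'.toWord := by
        have := toWord_mul_of_norm (x := a) (y := c') (by rw [← h1]; exact h3)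
        rw [← h1] at this; exact this
      have hXeq : x.toWord = a.toWord ++ (c'.toWord ++ [zx]) := by
        rw [← hXsplit, ← hx'w, hx'toW, List.append_assoc]
      have redcu : Reduced (c'.toWord ++ [zx]) := redX.suffix ⟨a.toWord, hXeq.symm⟩
      have hcu : c' * u = mk (c'.toWord ++ [zx]) := by
        rw [← mul_mk, mk_toWord, ← hudef]
      have hcul : nw (c' * u) = nw c' + 1 := by
        rw [nw, hcu, redcu.toWord_mk, List.length_append, List.length_singleton]
      refine ⟨a, c' * u, b, ?_, ?_, ?_, ?_, ?_⟩
      · rw [hxu, h1, mul_assoc]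
      · rw [hyy, h2, mul_inv_rev, mul_assoc]
      · have e1 : nw x = x.toWord.length := rfl
        have h0 : x.toWord.length ≠ 0 := by simpa using hXne
        have e2 : x.toWord.dropLast.length = x.toWord.length - 1 := List.length_dropLast
        have e3 : nw x' = x.toWord.dropLast.length := by rw [nw, hx'w]
        omega
      · have e1 : nw y = y.toWord.length := rfl
        have h0 : y.toWord.length ≠ 0 := by simpa using hYne
        have e2 : y.toWord.tail.length = y.toWord.length - 1 := List.length_tail
        have e3 : nw y' = y.toWord.tail.length := by rw [nw, hy'w]
        omega
      · rw [hxyeq]; exact h5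

theorem exists_cancel (x y : FreeGroup α) :
    ∃ a c b : FreeGroup α, x = a * c ∧ y = c⁻¹ * b ∧
      nw x = nw a + nw c ∧ nw y = nw c + nw b ∧
      (x * y).toWord = a.toWord ++ b.toWord :=
  exists_cancel_aux (nw x) x y le_rfl


/-- `p` is a geodesic prefix of `x` -/
def Pref (p x : FreeGroup α) : Prop := nw p + nw (p⁻¹ * x) = nw x

theorem pref_mk_take (x : FreeGroup α) (i : ℕ) : Pref (mk (x.toWord.take i)) x := by
  have redt : Reduced (x.toWord.take i) := (reduced_toWord x).prefix (List.take_prefix _ _)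
  have redd : Reduced (x.toWord.drop i) := (reduced_toWord x).suffix (List.drop_suffix _ _)
  have hsplit : x = mk (x.toWord.take i) * mk (x.toWord.drop i) := by
    rw [mul_mk, List.take_append_drop, mk_toWord]
  have hinv : (mk (x.toWord.take i))⁻¹ * x = mk (x.toWord.drop i) := by
    rw [inv_mul_eq_iff_eq_mul]; exact hsplit
  rw [Pref, hinv, nw, nw, redt.toWord_mk, redd.toWord_mk, nw, List.length_take,
    List.length_drop]
  have := List.length_take_le i x.toWord
  omega

theorem Pref.nw_le {p x : FreeGroup α} (h : Pref p x) : nw p ≤ nw x := by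
  rw [Pref] at h; omega

theorem Pref.toWord_eq {p x : FreeGroup α} (h : Pref p x) :
    p.toWord = x.toWord.take (nw p) := by
  have hx : x = p * (p⁻¹ * x) := by group
  have hw : (p * (p⁻¹ * x)).toWord = p.toWord ++ (p⁻¹ * x).toWord :=
    toWord_mul_of_norm (by rw [← hx]; exact h.symm)
  rw [← hx] at hw
  rw [hw, nw, List.take_left]

theorem pref_mk_eq {p x : FreeGroup α} (h : Pref p x) : p = mk (x.toWord.take (nw p)) := by
  rw [← h.toWord_eq, mk_toWord]

/-- Lemma A : a geodesic prefix of a product is a prefix of the first factor, or extends it -/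
theorem pref_mul {x y p : FreeGroup α} (h : Pref p (x * y)) :
    Pref p x ∨ Pref (x⁻¹ * p) y := by
  obtain ⟨a, c, b, h1, h2, h3, h4, h5⟩ := exists_cancel x y
  have hpw : p.toWord = (a.toWord ++ b.toWord).take (nw p) := by
    rw [← h5]; exact h.toWord_eq
  by_cases hle : nw p ≤ a.toWord.length
  · left
    have hpw' : p.toWord = a.toWord.take (nw p) := by
      rw [hpw, List.take_append, Nat.sub_eq_zero_of_le hle, List.take_zero,
        List.append_nil]
    have hpa : Pref p a := by
      have := pref_mk_take a (nw p)
      rwa [← hpw', mk_toWord] at this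
    have hpalen : nw (p⁻¹ * a) = nw a - nw p ∧ nw p ≤ nw a := by
      rw [Pref] at hpa; omega
    have t1 : nw (p⁻¹ * x) ≤ nw x - nw p := by
      have e1 : p⁻¹ * x = (p⁻¹ * a) * c := by rw [h1, mul_assoc]
      have e2 := nw_mul_le (p⁻¹ * a) c
      rw [← e1] at e2
      omega
    have t2 : nw x ≤ nw p + nw (p⁻¹ * x) := by
      have e1 : p * (p⁻¹ * x) = x := by group
      have e2 := nw_mul_le p (p⁻¹ * x)
      rw [e1] at e2
      exact e2
    rw [Pref]
    omega
  · right
    push_neg at hle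
    set j : ℕ := nw p - a.toWord.length with hj
    have hjb : j ≤ b.toWord.length := by
      have : p.toWord.length = min (nw p) (a.toWord.length + b.toWord.length) := by
        rw [hpw, List.length_take, List.length_append]
      have : nw p ≤ a.toWord.length + b.toWord.length := by
        rw [nw] at *; omega
      omega
    set b₁ : FreeGroup α := mk (b.toWord.take j) with hb₁
    have redb1 : Reduced (b.toWord.take j) := (reduced_toWord b).prefix (List.take_prefix _ _)
    have hpeq : p = a * b₁ := by
      rw [← mk_toWord (x := p), hpw, List.take_append,
        List.take_of_length_le (le_of_lt hle), ← hj, ← mul_mk, mk_toWord, hb₁]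
    have hprefb : Pref b₁ b := pref_mk_take b j
    have hb1len : nw b₁ = j := by
      rw [hb₁, nw, redb1.toWord_mk, List.length_take]
      omega
    have hxp : x⁻¹ * p = c⁻¹ * b₁ := by rw [hpeq, h1]; group
    have hyw : y.toWord = c⁻¹.toWord ++ b.toWord := by
      have : nw (c⁻¹ * b) = nw c⁻¹ + nw b := by
        rw [← h2, nw_inv]; exact h4
      have := toWord_mul_of_norm this
      rw [← h2] at this
      exact this
    have hred2 : Reduced (c⁻¹.toWord ++ b.toWord.take j) := by
      apply (reduced_toWord y).prefix
      refine ⟨b.toWord.drop j, ?_⟩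
      rw [List.append_assoc, List.take_append_drop, ← hyw]
    have hcb1 : c⁻¹ * b₁ = mk (c⁻¹.toWord ++ b.toWord.take j) := by
      rw [← mul_mk, mk_toWord, ← hb₁]
    have hcb1len : nw (c⁻¹ * b₁) = nw c + j := by
      rw [nw, hcb1, hred2.toWord_mk, List.length_append, List.length_take]
      have : c⁻¹.toWord.length = nw c := nw_inv c
      omega
    have hb1b : (x⁻¹ * p)⁻¹ * y = b₁⁻¹ * b := by rw [hxp, h2]; group
    have hb1blen : nw (b₁⁻¹ * b) = nw b - j ∧ j ≤ nw b := by
      rw [Pref] at hprefb; omega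
    rw [Pref, hb1b, hxp, hcb1len]
    omega


/-- the finite set of candidate coset representatives: prefixes of the generators -/
def Dfin (S : Finset (FreeGroup α)) : Finset (FreeGroup α) :=
  insert 1 (S.biUnion fun s => (Finset.range (s.toWord.length + 1)).image
    fun i => mk (s.toWord.take i))

theorem one_mem_Dfin (S : Finset (FreeGroup α)) : (1 : FreeGroup α) ∈ Dfin S :=
  Finset.mem_insert_self _ _

theorem take_mem_Dfin {S : Finset (FreeGroup α)} {s : FreeGroup α} (hs : s ∈ S) (i : ℕ)
    (hi : i ≤ s.toWord.length) : mk (s.toWord.take i) ∈ Dfin S := by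
  apply Finset.mem_insert_of_mem
  apply Finset.mem_biUnion.2
  exact ⟨s, hs, Finset.mem_image.2 ⟨i, Finset.mem_range.2 (by omega), rfl⟩⟩

/-- Core escape: any geodesic prefix of an element of `H = closure S` is, modulo right
multiplication by an element of `Dfin S`, in `H`. -/
theorem core_escape (S : Finset (FreeGroup α)) {h : FreeGroup α}
    (hh : h ∈ Subgroup.closure (S : Set (FreeGroup α))) :
    ∀ p : FreeGroup α, Pref p h →
      ∃ q ∈ Dfin S, p * q⁻¹ ∈ Subgroup.closure (S : Set (FreeGroup α)) := by
  induction hh using Subgroup.closure_induction with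
  | mem s hs =>
    intro p hp
    refine ⟨mk (s.toWord.take (nw p)), take_mem_Dfin hs _ hp.nw_le, ?_⟩
    rw [← pref_mk_eq hp]
    simpa using Subgroup.one_mem _
  | one =>
    intro p hp
    have hp1 : p = 1 := by
      rw [Pref] at hp
      simp only [mul_one] at hp
      have := nw_inv p
      have h10 : nw (1 : FreeGroup α) = 0 := rfl
      have hz : nw p = 0 := by omega
      exact nw_eq_zero.1 hz
    exact ⟨1, one_mem_Dfin S, by rw [hp1]; simpa using Subgroup.one_mem _⟩
  | mul x y hx hy ihx ihy =>
    intro p hp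
    rcases pref_mul hp with hpx | hpy
    · exact ihx p hpx
    · obtain ⟨q, hq, hmem⟩ := ihy (x⁻¹ * p) hpy
      refine ⟨q, hq, ?_⟩
      have : p * q⁻¹ = x * ((x⁻¹ * p) * q⁻¹) := by group
      rw [this]
      exact mul_mem hx hmem
  | inv x hx ihx =>
    intro p hp
    have hp' : Pref (x * p) x := by
      rw [Pref] at hp ⊢
      have e1 : nw (x * p) = nw (p⁻¹ * x⁻¹) := by
        rw [← nw_inv (x * p), mul_inv_rev]
      have e2 : (x * p)⁻¹ * x = p⁻¹ := by group
      have e3 : nw x⁻¹ = nw x := nw_inv x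
      have e4 : nw p⁻¹ = nw p := nw_inv p
      rw [e1, e2, e4]
      omega
    obtain ⟨q, hq, hmem⟩ := ihx (x * p) hp'
    refine ⟨q, hq, ?_⟩
    have : p * q⁻¹ = x⁻¹ * ((x * p) * q⁻¹) := by group
    rw [this]
    exact mul_mem (inv_mem hx) hmem


theorem cyc_junction {c : FreeGroup α} (hc2 : (c * c).toWord = c.toWord ++ c.toWord) :
    ∀ zx ∈ c.toWord.getLast?, ∀ zy ∈ c.toWord.head?, Rd zx zy := by
  have hred : Reduced (c.toWord ++ c.toWord) := hc2 ▸ reduced_toWord (c * c)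
  exact (List.isChain_append.1 hred).2.2

theorem toWord_ne_nil {c : FreeGroup α} (hc : c ≠ 1) : c.toWord ≠ [] :=
  fun hnil => hc (toWord_eq_nil_iff.1 hnil)

theorem powB {c : FreeGroup α} (hc : c ≠ 1) (hc2 : (c * c).toWord = c.toWord ++ c.toWord) :
    ∀ k : ℕ, (c ^ (k + 1)).toWord = (c ^ k).toWord ++ c.toWord := by
  intro k
  induction k with
  | zero => simp
  | succ k ih =>
    have hcne : c.toWord ≠ [] := toWord_ne_nil hc
    have hlast : (c ^ (k + 1)).toWord.getLast? = c.toWord.getLast? := by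
      rw [ih]; exact List.getLast?_append_of_ne_nil _ hcne
    have hredapp : Reduced ((c ^ (k + 1)).toWord ++ c.toWord) := by
      apply List.isChain_append.2
      refine ⟨reduced_toWord _, reduced_toWord _, ?_⟩
      intro zx hzx zy hzy
      exact cyc_junction hc2 zx (hlast ▸ hzx) zy hzy
    have heq : c ^ (k + 2) = mk ((c ^ (k + 1)).toWord ++ c.toWord) := by
      rw [← mul_mk, mk_toWord, mk_toWord, ← pow_succ]
    rw [heq, hredapp.toWord_mk]

theorem powA {c : FreeGroup α} (hc : c ≠ 1) (hc2 : (c * c).toWord = c.toWord ++ c.toWord) :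
    ∀ k : ℕ, (c ^ (k + 1)).toWord = c.toWord ++ (c ^ k).toWord := by
  intro k
  induction k with
  | zero => simp
  | succ k ih =>
    have hcne : c.toWord ≠ [] := toWord_ne_nil hc
    have hhead : (c ^ (k + 1)).toWord.head? = c.toWord.head? := by
      rw [ih]; exact List.head?_append_of_ne_nil _ hcne
    have hredapp : Reduced (c.toWord ++ (c ^ (k + 1)).toWord) := by
      apply List.isChain_append.2
      refine ⟨reduced_toWord _, reduced_toWord _, ?_⟩
      intro zx hzx zy hzy
      exact cyc_junction hc2 zx hzx zy (hhead ▸ hzy)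
    have heq : c ^ (k + 2) = mk (c.toWord ++ (c ^ (k + 1)).toWord) := by
      rw [← mul_mk, mk_toWord, mk_toWord, ← pow_succ']
    rw [heq, hredapp.toWord_mk]

theorem pow_nw {c : FreeGroup α} (hc : c ≠ 1) (hc2 : (c * c).toWord = c.toWord ++ c.toWord) :
    ∀ k : ℕ, nw (c ^ k) = k * nw c := by
  intro k
  induction k with
  | zero => simp [nw]
  | succ k ih =>
    show (c ^ (k + 1)).toWord.length = (k + 1) * nw c
    rw [powB hc hc2 k, List.length_append]
    change nw (c ^ k) + nw c = _
    rw [ih]; ring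

theorem pow_getLast? {c : FreeGroup α} (hc : c ≠ 1)
    (hc2 : (c * c).toWord = c.toWord ++ c.toWord) (k : ℕ) :
    (c ^ (k + 1)).toWord.getLast? = c.toWord.getLast? := by
  rw [powB hc hc2 k]; exact List.getLast?_append_of_ne_nil _ (toWord_ne_nil hc)

theorem pow_head? {c : FreeGroup α} (hc : c ≠ 1)
    (hc2 : (c * c).toWord = c.toWord ++ c.toWord) (k : ℕ) :
    (c ^ (k + 1)).toWord.head? = c.toWord.head? := by
  rw [powA hc hc2 k]; exact List.head?_append_of_ne_nil _ (toWord_ne_nil hc)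

/-- conjugation escape: if `g c g⁻¹ ∈ H` for a cyclically reduced `c ≠ 1`, then `g`
lies in `H·q` for some `q` in the finite candidate set. -/
theorem conj_escape (S : Finset (FreeGroup α)) {c g : FreeGroup α} (hc : c ≠ 1)
    (hc2 : (c * c).toWord = c.toWord ++ c.toWord)
    (hg : g * c * g⁻¹ ∈ Subgroup.closure (S : Set (FreeGroup α))) :
    ∃ q ∈ Dfin S, g * q⁻¹ ∈ Subgroup.closure (S : Set (FreeGroup α)) := by
  have hgn : ∀ n : ℕ, g * c ^ n * g⁻¹ ∈ Subgroup.closure (S : Set (FreeGroup α)) := by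
    intro n
    have : g * c ^ n * g⁻¹ = (g * c * g⁻¹) ^ n := conj_pow.symm
    rw [this]; exact pow_mem hg n
  set m : ℕ := nw g + 1 with hm
  obtain ⟨a, d, b, k1, k2, k3, k4, k5⟩ := exists_cancel g (c ^ m)
  obtain ⟨a₂, d₂, b₂, l1, l2, l3, l4, l5⟩ := exists_cancel (c ^ m) g⁻¹
  have hcl : 1 ≤ nw c := by
    have h0 : nw c ≠ 0 := fun h => hc (nw_eq_zero.1 h)
    omega
  have hnwm : nw (c ^ m) = m * nw c := pow_nw hc hc2 m
  have hmle : m ≤ m * nw c := Nat.le_mul_of_pos_right m hcl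
  rw [nw_inv] at l4
  have hcm_ge : m ≤ nw (c ^ m) := by rw [hnwm]; exact hmle
  -- b is nonempty
  have hbne : b.toWord ≠ [] := by
    intro hnil
    have hb0 : nw b = 0 := by show b.toWord.length = 0; rw [hnil]; rfl
    omega
  have ha2ne : a₂.toWord ≠ [] := by
    intro hnil
    have ha0 : nw a₂ = 0 := by show a₂.toWord.length = 0; rw [hnil]; rfl
    omega
  -- last letter of toWord (g * c^m) is the last letter of c
  have hcmW : (c ^ m).toWord = d⁻¹.toWord ++ b.toWord := by
    have hn : nw (d⁻¹ * b) = nw d⁻¹ + nw b := by rw [← k2, nw_inv]; exact k4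
    have := toWord_mul_of_norm hn
    rw [← k2] at this; exact this
  have hlast1 : (g * c ^ m).toWord.getLast? = c.toWord.getLast? := by
    rw [k5, List.getLast?_append_of_ne_nil _ hbne, ← List.getLast?_append_of_ne_nil d⁻¹.toWord hbne,
      ← hcmW]
    have : m = (m - 1) + 1 := by omega
    rw [this]
    exact pow_getLast? hc hc2 (m - 1)
  have hcmW2 : (c ^ m).toWord = a₂.toWord ++ d₂.toWord := by
    have hn : nw (a₂ * d₂) = nw a₂ + nw d₂ := by rw [← l1]; exact l3
    have := toWord_mul_of_norm hn
    rw [← l1] at this; exact this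
  have hhead2 : (c ^ m * g⁻¹).toWord.head? = c.toWord.head? := by
    rw [l5, List.head?_append_of_ne_nil _ ha2ne, ← List.head?_append_of_ne_nil a₂.toWord (l₂ := d₂.toWord) ha2ne,
      ← hcmW2]
    have : m = (m - 1) + 1 := by omega
    rw [this]
    exact pow_head? hc hc2 (m - 1)
  -- the concatenation is reduced
  have hredC : Reduced ((g * c ^ m).toWord ++ (c ^ m * g⁻¹).toWord) := by
    apply List.isChain_append.2
    refine ⟨reduced_toWord _, reduced_toWord _, ?_⟩
    intro zx hzx zy hzy
    exact cyc_junction hc2 zx (hlast1 ▸ hzx) zy (hhead2 ▸ hzy)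
  have heq : g * c ^ (2 * m) * g⁻¹ = (g * c ^ m) * (c ^ m * g⁻¹) := by
    rw [two_mul, pow_add]; group
  have hWeq : (g * c ^ (2 * m) * g⁻¹).toWord = (g * c ^ m).toWord ++ (c ^ m * g⁻¹).toWord := by
    have e2 : g * c ^ m * (c ^ m * g⁻¹) = mk ((g * c ^ m).toWord ++ (c ^ m * g⁻¹).toWord) := by
      rw [← mul_mk, mk_toWord, mk_toWord]
    rw [heq, e2, hredC.toWord_mk]
  have hpref : Pref (g * c ^ m) (g * c ^ (2 * m) * g⁻¹) := by
    rw [Pref]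
    have e1 : (g * c ^ m)⁻¹ * (g * c ^ (2 * m) * g⁻¹) = c ^ m * g⁻¹ := by
      rw [heq]; group
    rw [e1, nw, nw, nw, hWeq, List.length_append]
  obtain ⟨q, hq, hq2⟩ := core_escape S (hgn (2 * m)) (g * c ^ m) hpref
  refine ⟨q, hq, ?_⟩
  have : g * q⁻¹ = (g * c ^ m * g⁻¹)⁻¹ * ((g * c ^ m) * q⁻¹) := by group
  rw [this]
  exact mul_mem (inv_mem (hgn m)) hq2


/-- cyclic reduction -/
theorem cyc_red : ∀ (n : ℕ) (k : FreeGroup α), nw k ≤ n → k ≠ 1 →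
    ∃ p c : FreeGroup α, c ≠ 1 ∧ (c * c).toWord = c.toWord ++ c.toWord ∧ k = p * c * p⁻¹ := by
  intro n
  induction n with
  | zero =>
    intro k hk hk1
    exact absurd (nw_eq_zero.1 (Nat.le_zero.1 hk)) hk1
  | succ n ih =>
    intro k hk hk1
    by_cases hred : Reduced (k.toWord ++ k.toWord)
    · refine ⟨1, k, hk1, ?_, by group⟩
      have hmk : k * k = mk (k.toWord ++ k.toWord) := by rw [← mul_mk, mk_toWord]
      rw [hmk, hred.toWord_mk]
    · have redX : Reduced k.toWord := reduced_toWord k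
      have hj : ¬ ∀ zx ∈ k.toWord.getLast?, ∀ zy ∈ k.toWord.head?, Rd zx zy :=
        fun hj => hred (List.isChain_append.2 ⟨redX, redX, hj⟩)
      push_neg at hj
      obtain ⟨zx, hzx, zy, hzy, hR⟩ := hj
      rw [Rd, not_not] at hR
      have hXne : k.toWord ≠ [] := by rintro h; rw [h] at hzx; simp at hzx
      have hzy' : k.toWord.head hXne = zy := by
        rw [List.head?_eq_head hXne, Option.mem_some_iff] at hzy; exact hzy
      have hXsplit : zy :: k.toWord.tail = k.toWord := by
        rw [← hzy']; exact List.cons_head_tail hXne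
      have htne : k.toWord.tail ≠ [] := by
        intro h0
        have hX1 : k.toWord = [zy] := by rw [← hXsplit, h0]
        rw [hX1] at hzx
        have hzxzy : zx = zy := by
          have := hzx
          simp at this
          exact this.symm
        rw [hzxzy] at hR
        simp at hR
      have hlast : k.toWord.tail.getLast? = some zx := by
        have e : (zy :: k.toWord.tail).getLast? = k.toWord.tail.getLast? := by
          rw [← List.singleton_append]
          exact List.getLast?_append_of_ne_nil _ htne
        rw [← hXsplit, e] at hzx
        exact hzx
      have hzx'' : k.toWord.tail.getLast htne = zx := by
        have e2 := List.getLast?_eq_getLast htne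
        rw [e2] at hlast
        exact Option.some.inj hlast
      have htsplit : k.toWord.tail.dropLast ++ [zx] = k.toWord.tail := by
        rw [← hzx'']; exact List.dropLast_append_getLast htne
      have redMid : Reduced k.toWord.tail.dropLast :=
        (redX.tail).prefix (List.dropLast_prefix _)
      have hk1w : (mk k.toWord.tail.dropLast : FreeGroup α).toWord = k.toWord.tail.dropLast :=
        redMid.toWord_mk
      have hXfull : k.toWord = zy :: (k.toWord.tail.dropLast ++ [zx]) := by
        rw [htsplit, hXsplit]
      have hkeq : k = mk [zy] * mk k.toWord.tail.dropLast * mk [zx] := by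
        have e3 : mk [zy] * mk k.toWord.tail.dropLast * mk [zx]
            = mk (zy :: (k.toWord.tail.dropLast ++ [zx])) := by
          rw [mul_mk, mul_mk]
          rfl
        rw [e3, ← hXfull, mk_toWord]
      have hinvzz : mk [zx] = (mk [zy] : FreeGroup α)⁻¹ := by
        rw [inv_mk]
        have hzxeq : zx = (zy.1, !zy.2) := Prod.ext hR.1 hR.2
        rw [hzxeq]
        simp [invRev]
      have hk1ne : (mk k.toWord.tail.dropLast : FreeGroup α) ≠ 1 := by
        intro h1
        apply hk1
        rw [hkeq, h1, hinvzz]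
        group
      have hlen2 : k.toWord.length = k.toWord.tail.dropLast.length + 2 := by
        rw [hXfull]
        simp
      have hk1le : nw (mk k.toWord.tail.dropLast : FreeGroup α) ≤ n := by
        have e4 : nw (mk k.toWord.tail.dropLast : FreeGroup α) = k.toWord.tail.dropLast.length := by
          rw [nw, hk1w]
        have e5 : nw k = k.toWord.length := rfl
        omega
      obtain ⟨p', c, hc1, hc2, hc3⟩ := ih (mk k.toWord.tail.dropLast) hk1le hk1ne
      refine ⟨mk [zy] * p', c, hc1, hc2, ?_⟩
      rw [hkeq, hc3, hinvzz]
      group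

/-- the main element-wise escape lemma -/
theorem main_escape (S : Finset (FreeGroup α)) (K : Subgroup (FreeGroup α)) (hK : K ≠ ⊥) :
    ∃ R : Finset (FreeGroup α), ∀ g : FreeGroup α,
      (∀ k ∈ K, g * k * g⁻¹ ∈ Subgroup.closure (S : Set (FreeGroup α))) →
      ∃ q ∈ R, g * q⁻¹ ∈ Subgroup.closure (S : Set (FreeGroup α)) := by
  obtain ⟨k₀, hk₀K, hk₀⟩ : ∃ x ∈ K, x ≠ (1 : FreeGroup α) := by
    by_contra hcon
    push_neg at hcon
    exact hK ((Subgroup.eq_bot_iff_forall K).2 hcon)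
  obtain ⟨p₀, c, hc1, hc2, hc3⟩ := cyc_red (nw k₀) k₀ le_rfl hk₀
  refine ⟨(Dfin S).image (fun q => q * p₀⁻¹), fun g hg => ?_⟩
  have hconj : (g * p₀) * c * (g * p₀)⁻¹ ∈ Subgroup.closure (S : Set (FreeGroup α)) := by
    have h1 := hg k₀ hk₀K
    rw [hc3] at h1
    have e : (g * p₀) * c * (g * p₀)⁻¹ = g * (p₀ * c * p₀⁻¹) * g⁻¹ := by group
    rw [e]
    exact h1
  obtain ⟨q, hq, hq2⟩ := conj_escape S hc1 hc2 hconj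
  refine ⟨q * p₀⁻¹, Finset.mem_image_of_mem _ hq, ?_⟩
  have e : g * (q * p₀⁻¹)⁻¹ = (g * p₀) * q⁻¹ := by group
  rw [e]
  exact hq2

end StallingsAux


/-- In a finitely generated free group `F`, a conjugacy class of a finitely
generated subgroup `K ≤ H` splits into only finitely many `H`-conjugacy classes:
there is a finite set of subgroups so that every subgroup of `H` that is
`F`-conjugate to `K` is `H`-conjugate to one of them. -/
theorem finitely_many_H_conjugacy_classes {α : Type*} [Finite α]
    (H K : Subgroup (FreeGroup α)) (hKH : K ≤ H) (hK : K.FG) (hH : H.FG) :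
    ∃ s : Finset (Subgroup (FreeGroup α)),
      ∀ L : Subgroup (FreeGroup α), L ≤ H →
        (∃ g : FreeGroup α, L = K.map (MulAut.conj g).toMonoidHom) →
        ∃ L' ∈ s, ∃ h ∈ H, L = L'.map (MulAut.conj h).toMonoidHom := by
  letI := Classical.decEq α
  letI := Classical.decEq (Subgroup (FreeGroup α))
  obtain ⟨S, hS⟩ := hH
  by_cases hKbot : K = ⊥
  · refine ⟨{⊥}, fun L hLH hLg => ?_⟩
    obtain ⟨g, rfl⟩ := hLg
    refine ⟨⊥, Finset.mem_singleton_self _, 1, H.one_mem, ?_⟩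
    rw [hKbot, Subgroup.map_bot, Subgroup.map_bot]
  · obtain ⟨R, hR⟩ := StallingsAux.main_escape S K hKbot
    refine ⟨R.image (fun q => K.map (MulAut.conj q).toMonoidHom), fun L hLH hLg => ?_⟩
    obtain ⟨g, rfl⟩ := hLg
    have hg : ∀ k ∈ K, g * k * g⁻¹ ∈ Subgroup.closure (S : Set (FreeGroup α)) := by
      intro k hk
      rw [hS]
      have hmem : (MulAut.conj g).toMonoidHom k ∈ K.map (MulAut.conj g).toMonoidHom :=
        Subgroup.mem_map_of_mem _ hk
      have := hLH hmem
      simpa [MulAut.conj_apply] using this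
    obtain ⟨q, hq, hq2⟩ := hR g hg
    rw [hS] at hq2
    refine ⟨K.map (MulAut.conj q).toMonoidHom, Finset.mem_image_of_mem _ hq, g * q⁻¹, hq2, ?_⟩
    rw [Subgroup.map_map]
    congr 1
    ext x
    simp only [MonoidHom.coe_comp, Function.comp_apply, MulEquiv.coe_toMonoidHom,
      MulAut.conj_apply]
    group
end
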